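/- arXiv:2003.04636 — 4 statements merged into one kernel-verified Lean document; each statement's English description precedes it below -/
import Mathlib

section
/- Let Z₁ and Z₂ be independent random vectors, each distributed as a random vector Z = (Z_1, …, Z_q)ᵀ with E(Z_j) = 0, E(Z_j²) = 1 and E(Z_j⁴) = 3 + Δ < ∞ for all j, satisfying the product-moment factorization E(Z_{l₁}^{α₁} ⋯ Z_{l_k}^{α_k}) = E(Z_{l₁}^{α₁}) ⋯ E(Z_{l_k}^{α_k}) for all distinct indices l₁ ≠ ⋯ ≠ l_k and nonnegative integers with α₁ + ⋯ + α_k ≤ 8. Then for any symmetric matrix Γ ∈ ℝ^{q×q}: E[(Z₁ᵀ Γ Z₂)⁴] = 3 tr²(Γ²) + 6 tr(Γ⁴) + 6Δ tr(Γ² ⊙ Γ²) + Δ² Σ_{i,j=1}^{q} Γ_{ij}⁴, and consequently E[(Z₁ᵀ Γ Z₂)⁴] ≤ 3 tr²(Γ²) + 6 tr(Γ⁴) + 6Δ tr(Γ⁴) + Δ² tr²(Γ²). -/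
open MeasureTheory ProbabilityTheory Filter Matrix
open scoped BigOperators Classical

noncomputable section

namespace PHT

/-- Population Kendall tau correlation of coordinates `i, j` for a law `ν` on `Fin p → ℝ`,
computed from two independent copies. -/
def kendallPop {p : ℕ} (ν : Measure (Fin p → ℝ)) (i j : Fin p) : ℝ :=
  ∫ w : (Fin p → ℝ) × (Fin p → ℝ),
    Real.sign ((w.1 i - w.2 i) * (w.1 j - w.2 j)) ∂(ν.prod ν)

/-- Sample Kendall tau correlation computed from the data `x`. -/
def kendallSample {n p : ℕ} (x : Fin n → Fin p → ℝ) (i j : Fin p) : ℝ :=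
  (2 / ((n : ℝ) * ((n : ℝ) - 1))) *
    ∑ s : Fin n, ∑ t : Fin n,
      if s < t then Real.sign ((x s i - x t i) * (x s j - x t j)) else 0

/-- Index set of strongly correlated pairs at threshold `τ0`. -/
def setA1 {p : ℕ} (τ : Fin p → Fin p → ℝ) (τ0 : ℝ) : Finset (Fin p × Fin p) :=
  Finset.univ.filter fun ij => ij.1 < ij.2 ∧ τ0 < τ ij.1 ij.2

/-- Index set of coordinates with little correlation with the others, at threshold `τ0`. -/
def setA2 {p : ℕ} (τ : Fin p → Fin p → ℝ) (τ0 : ℝ) : Finset (Fin p) :=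
  Finset.univ.filter fun i => ∀ j, j ≠ i → τ i j < τ0

/-- The 2×p selection matrix with rows `eᵢ`, `eⱼ`. -/
def P2 {p : ℕ} (i j : Fin p) : Matrix (Fin 2) (Fin p) ℝ :=
  fun r c => if r = 0 then (if c = i then (1 : ℝ) else 0) else (if c = j then 1 else 0)

/-- The 1×p selection matrix `eᵢ`. -/
def P1 {p : ℕ} (i : Fin p) : Matrix (Fin 1) (Fin p) ℝ :=
  fun _ c => if c = i then (1 : ℝ) else 0

/-- The pairwise-Hotelling weighting matrix built from a p×p matrix `G` and index sets. -/
def PO {p : ℕ} (G : Matrix (Fin p) (Fin p) ℝ)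
    (A1 : Finset (Fin p × Fin p)) (A2 : Finset (Fin p)) : Matrix (Fin p) (Fin p) ℝ :=
  (∑ ij ∈ A1, (P2 ij.1 ij.2)ᵀ * (P2 ij.1 ij.2 * G * (P2 ij.1 ij.2)ᵀ)⁻¹ * P2 ij.1 ij.2) +
    ∑ i ∈ A2, (P1 i)ᵀ * (P1 i * G * (P1 i)ᵀ)⁻¹ * P1 i

/-- Sample mean of the observations indexed by `K`. -/
def sampleMeanOn {n p : ℕ} (x : Fin n → Fin p → ℝ) (K : Finset (Fin n)) : Fin p → ℝ :=
  fun i => (∑ k ∈ K, x k i) / (K.card : ℝ)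

/-- Sample covariance matrix of the observations indexed by `K`. -/
def sampleCovOn {n p : ℕ} (x : Fin n → Fin p → ℝ) (K : Finset (Fin n)) :
    Matrix (Fin p) (Fin p) ℝ :=
  fun i j =>
    (∑ k ∈ K, (x k i - sampleMeanOn x K i) * (x k j - sampleMeanOn x K j)) / ((K.card : ℝ) - 1)

/-- Sample covariance matrix of the full data. -/
def sampleCov {n p : ℕ} (x : Fin n → Fin p → ℝ) : Matrix (Fin p) (Fin p) ℝ :=
  sampleCovOn x Finset.univ

/-- Bilinear form `vᵀ M w`. -/
def quadForm {p : ℕ} (M : Matrix (Fin p) (Fin p) ℝ) (v w : Fin p → ℝ) : ℝ :=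
  v ⬝ᵥ M.mulVec w

/-- Frobenius norm of a matrix. -/
def frob {m n : ℕ} (A : Matrix (Fin m) (Fin n) ℝ) : ℝ :=
  Real.sqrt (∑ i, ∑ j, (A i j) ^ 2)

/-- The one-sample pairwise Hotelling statistic `T₁(τ₀)`. -/
def T1stat {n p : ℕ} (x : Fin n → Fin p → ℝ) (mu0 : Fin p → ℝ) (τ0 : ℝ) : ℝ :=
  (1 / ((n : ℝ) * ((n : ℝ) - 1))) *
    ∑ s : Fin n, ∑ t : Fin n,
      if t ≠ s then
        quadForm
          (PO (sampleCovOn x (Finset.univ \ {s, t}))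
            (setA1 (fun i j => |kendallSample x i j|) τ0)
            (setA2 (fun i j => |kendallSample x i j|) τ0))
          (fun i => x s i - mu0 i) (fun i => x t i - mu0 i)
      else 0

/-- The one-sample estimator of `tr(Λ₁²)`. -/
def trHat1 {n p : ℕ} (x : Fin n → Fin p → ℝ) (τ0 : ℝ) : ℝ :=
  (1 / ((n : ℝ) * ((n : ℝ) - 1))) *
    ∑ s : Fin n, ∑ t : Fin n,
      if t ≠ s then
        quadForm
          (PO (sampleCovOn x (Finset.univ \ {s, t}))
            (setA1 (fun i j => |kendallSample x i j|) τ0)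
            (setA2 (fun i j => |kendallSample x i j|) τ0))
          (fun i => x s i - sampleMeanOn x (Finset.univ \ {s, t}) i) (x t) *
        quadForm
          (PO (sampleCovOn x (Finset.univ \ {s, t}))
            (setA1 (fun i j => |kendallSample x i j|) τ0)
            (setA2 (fun i j => |kendallSample x i j|) τ0))
          (fun i => x t i - sampleMeanOn x (Finset.univ \ {s, t}) i) (x s)
      else 0

/-- Pooled two-sample Kendall tau estimates. -/
def pooledTauHat {n1 n2 p : ℕ} (x : Fin n1 → Fin p → ℝ) (y : Fin n2 → Fin p → ℝ)
    (i j : Fin p) : ℝ :=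
  ((n1 : ℝ) * |kendallSample x i j| + (n2 : ℝ) * |kendallSample y i j|) / ((n1 : ℝ) + (n2 : ℝ))

/-- Pooled sample covariance without observations `s`, `t` of group 1. -/
def S1star {n1 n2 p : ℕ} (x : Fin n1 → Fin p → ℝ) (y : Fin n2 → Fin p → ℝ) (s t : Fin n1) :
    Matrix (Fin p) (Fin p) ℝ :=
  ((n1 : ℝ) + (n2 : ℝ) - 2)⁻¹ •
    (((n1 : ℝ) - 2) • sampleCovOn x (Finset.univ \ {s, t}) + (n2 : ℝ) • sampleCov y)

/-- Pooled sample covariance without observations `s`, `t` of group 2. -/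
def S2star {n1 n2 p : ℕ} (x : Fin n1 → Fin p → ℝ) (y : Fin n2 → Fin p → ℝ) (s t : Fin n2) :
    Matrix (Fin p) (Fin p) ℝ :=
  ((n1 : ℝ) + (n2 : ℝ) - 2)⁻¹ •
    ((n1 : ℝ) • sampleCov x + ((n2 : ℝ) - 2) • sampleCovOn y (Finset.univ \ {s, t}))

/-- Pooled sample covariance without observation `s` of group 1 and `t` of group 2. -/
def S12star {n1 n2 p : ℕ} (x : Fin n1 → Fin p → ℝ) (y : Fin n2 → Fin p → ℝ)
    (s : Fin n1) (t : Fin n2) : Matrix (Fin p) (Fin p) ℝ :=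
  ((n1 : ℝ) + (n2 : ℝ) - 2)⁻¹ •
    (((n1 : ℝ) - 1) • sampleCovOn x (Finset.univ \ {s}) +
      ((n2 : ℝ) - 1) • sampleCovOn y (Finset.univ \ {t}))

/-- The two-sample pairwise Hotelling statistic `T₂(τ₀)`. -/
def T2stat {n1 n2 p : ℕ} (x : Fin n1 → Fin p → ℝ) (y : Fin n2 → Fin p → ℝ) (τ0 : ℝ) : ℝ :=
  (1 / ((n1 : ℝ) * ((n1 : ℝ) - 1))) *
      (∑ s : Fin n1, ∑ t : Fin n1,
        if t ≠ s then
          quadForm (PO (S1star x y s t) (setA1 (pooledTauHat x y) τ0)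
            (setA2 (pooledTauHat x y) τ0)) (x s) (x t)
        else 0) +
    (1 / ((n2 : ℝ) * ((n2 : ℝ) - 1))) *
      (∑ s : Fin n2, ∑ t : Fin n2,
        if t ≠ s then
          quadForm (PO (S2star x y s t) (setA1 (pooledTauHat x y) τ0)
            (setA2 (pooledTauHat x y) τ0)) (y s) (y t)
        else 0) -
    (2 / ((n1 : ℝ) * (n2 : ℝ))) *
      ∑ s : Fin n1, ∑ t : Fin n2,
        quadForm (PO (S12star x y s t) (setA1 (pooledTauHat x y) τ0)
          (setA2 (pooledTauHat x y) τ0)) (x s) (y t)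

/-- The two-sample estimator of `tr(Λ₁²)`. -/
def trHat2 {n1 n2 p : ℕ} (x : Fin n1 → Fin p → ℝ) (y : Fin n2 → Fin p → ℝ) (τ0 : ℝ) : ℝ :=
  (1 / (2 * (n1 : ℝ) * ((n1 : ℝ) - 1))) *
      (∑ s : Fin n1, ∑ t : Fin n1,
        if t ≠ s then
          quadForm (PO (S1star x y s t) (setA1 (pooledTauHat x y) τ0)
              (setA2 (pooledTauHat x y) τ0))
            (fun i => x s i - sampleMeanOn x (Finset.univ \ {s, t}) i) (x t) *
          quadForm (PO (S1star x y s t) (setA1 (pooledTauHat x y) τ0)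
              (setA2 (pooledTauHat x y) τ0))
            (fun i => x t i - sampleMeanOn x (Finset.univ \ {s, t}) i) (x s)
        else 0) +
    (1 / (2 * (n2 : ℝ) * ((n2 : ℝ) - 1))) *
      ∑ s : Fin n2, ∑ t : Fin n2,
        if t ≠ s then
          quadForm (PO (S2star x y s t) (setA1 (pooledTauHat x y) τ0)
              (setA2 (pooledTauHat x y) τ0))
            (fun i => y s i - sampleMeanOn y (Finset.univ \ {s, t}) i) (y t) *
          quadForm (PO (S2star x y s t) (setA1 (pooledTauHat x y) τ0)
              (setA2 (pooledTauHat x y) τ0))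
            (fun i => y t i - sampleMeanOn y (Finset.univ \ {s, t}) i) (y s)
        else 0

/-- The ρ-mixing condition for the coordinate sequence of `X`, with bound `bound s` on the
mixing coefficient at distance `s`; the supremum defining ρ(s) runs over index sets of
cardinality at most two. -/
def rhoMixBound {Ω : Type*} [MeasurableSpace Ω] (μ : Measure Ω) {p : ℕ}
    (X : Ω → Fin p → ℝ) (bound : ℕ → ℝ) : Prop :=
  ∀ (s : ℕ) (A B : Finset (Fin p)), A.card ≤ 2 → B.card ≤ 2 →
    (∀ i ∈ A, ∀ j ∈ B, s ≤ ((i : ℤ) - (j : ℤ)).natAbs) →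
    ∀ g1 g2 : Ω → ℝ,
      Measurable[MeasurableSpace.comap (fun ω (i : A) => X ω i.1) inferInstance] g1 →
      Measurable[MeasurableSpace.comap (fun ω (j : B) => X ω j.1) inferInstance] g2 →
      MemLp g1 2 μ → MemLp g2 2 μ →
      |∫ ω, (g1 ω - ∫ a, g1 a ∂μ) * (g2 ω - ∫ a, g2 a ∂μ) ∂μ| ≤
        bound s * Real.sqrt (∫ ω, (g1 ω - ∫ a, g1 a ∂μ) ^ 2 ∂μ) *
          Real.sqrt (∫ ω, (g2 ω - ∫ a, g2 a ∂μ) ^ 2 ∂μ)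

end PHT

namespace S7aux

variable {q : ℕ}

noncomputable def dd (a b : Fin q) : ℝ := if a = b then 1 else 0

noncomputable def mm (Δ : ℝ) (a b c d : Fin q) : ℝ :=
  dd a b * dd c d + dd a c * dd b d + dd a d * dd b c + Δ * (dd a b * dd a c * dd a d)

noncomputable def BODY {Ω : Type*} (Z₁ Z₂ : Ω → Fin q → ℝ) (Γ : Matrix (Fin q) (Fin q) ℝ)
    (i1 i2 i3 i4 j1 j2 j3 j4 : Fin q) (ω : Ω) : ℝ :=
  Γ i1 j1 * Γ i2 j2 * Γ i3 j3 * Γ i4 j4 *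
    ((Z₁ ω i1 * Z₁ ω i2 * Z₁ ω i3 * Z₁ ω i4) * (Z₂ ω j1 * Z₂ ω j2 * Z₂ ω j3 * Z₂ ω j4))

lemma prod4_sum (g1 g2 g3 g4 : Fin q → ℝ) :
    (∑ j, g1 j) * (∑ j, g2 j) * (∑ j, g3 j) * (∑ j, g4 j)
    = ∑ j1, ∑ j2, ∑ j3, ∑ j4, g1 j1 * g2 j2 * g3 j3 * g4 j4 := by
  rw [show (∑ j, g1 j) * (∑ j, g2 j) * (∑ j, g3 j) * (∑ j, g4 j)
      = (∑ j, g1 j) * ((∑ j, g2 j) * ((∑ j, g3 j) * (∑ j, g4 j))) from by ring]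
  rw [Finset.sum_mul]
  refine Finset.sum_congr rfl fun j1 _ => ?_
  rw [Finset.sum_mul, Finset.mul_sum]
  refine Finset.sum_congr rfl fun j2 _ => ?_
  rw [Finset.sum_mul, Finset.mul_sum, Finset.mul_sum]
  refine Finset.sum_congr rfl fun j3 _ => ?_
  rw [Finset.mul_sum, Finset.mul_sum, Finset.mul_sum]
  exact Finset.sum_congr rfl fun j4 _ => by ring

lemma pow4_sum (f : Fin q → ℝ) :
    (∑ j, f j) ^ 4 = ∑ j1, ∑ j2, ∑ j3, ∑ j4, f j1 * f j2 * f j3 * f j4 := by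
  rw [show (∑ j, f j) ^ 4 = (∑ j, f j) * (∑ j, f j) * (∑ j, f j) * (∑ j, f j) from by ring,
    prod4_sum]

lemma prod_ind (f : Fin q → ℝ) (a b c d : Fin q) :
    ∏ j, f j ^ (((if a = j then 1 else 0) + (if b = j then 1 else 0)
      + (if c = j then 1 else 0) + (if d = j then 1 else 0) : ℕ))
    = f a * f b * f c * f d := by
  simp only [pow_add, Finset.prod_mul_distrib, pow_ite, pow_one, pow_zero,
    Finset.prod_ite_eq, Finset.mem_univ, if_true]

lemma sum_ind (a b c d : Fin q) :
    ∑ j, (((if a = j then 1 else 0) + (if b = j then 1 else 0)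
      + (if c = j then 1 else 0) + (if d = j then 1 else 0) : ℕ)) = 4 := by
  simp [Finset.sum_add_distrib, Finset.sum_ite_eq]

lemma collapse4 (Δ : ℝ) (v1 v2 v3 v4 : Fin q → ℝ) :
    ∑ j1, ∑ j2, ∑ j3, ∑ j4, v1 j1 * v2 j2 * v3 j3 * v4 j4 * mm Δ j1 j2 j3 j4
    = (∑ j, v1 j * v2 j) * (∑ j, v3 j * v4 j)
      + (∑ j, v1 j * v3 j) * (∑ j, v2 j * v4 j)
      + (∑ j, v1 j * v4 j) * (∑ j, v2 j * v3 j)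
      + Δ * ∑ j, v1 j * v2 j * v3 j * v4 j := by
  simp only [mm, dd, mul_add, Finset.sum_add_distrib, mul_ite, ite_mul, mul_one, mul_zero,
    one_mul, zero_mul, Finset.sum_ite_irrel, Finset.sum_ite_eq, Finset.sum_ite_eq',
    Finset.sum_const_zero, Finset.mem_univ, if_true, Finset.sum_mul_sum, Finset.mul_sum]
  ring_nf
  simp only [Finset.sum_mul]
  congr 1
  case _ =>
    congr 1
    case _ =>
      congr 1 <;>
        (rw [Finset.sum_comm] <;>
          exact Finset.sum_congr rfl fun x _ => Finset.sum_congr rfl fun y _ => by ring)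
    case _ =>
      rw [Finset.sum_comm] <;>
        exact Finset.sum_congr rfl fun x _ => Finset.sum_congr rfl fun y _ => by ring
  case _ => exact Finset.sum_congr rfl fun x _ => by ring


lemma collapseB1 (Δ : ℝ) (B : Fin q → Fin q → ℝ) :
    ∑ i1, ∑ i2, ∑ i3, ∑ i4, B i1 i2 * B i3 i4 * mm Δ i1 i2 i3 i4
    = (∑ x, ∑ y, B x x * B y y) + (∑ x, ∑ y, B x y * B x y) + (∑ x, ∑ y, B x y * B y x)
      + ∑ x, B x x * B x x * Δ := by
  simp only [mm, dd, mul_add, Finset.sum_add_distrib, mul_ite, ite_mul, mul_one, mul_zero,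
    one_mul, zero_mul, Finset.sum_ite_irrel, Finset.sum_ite_eq, Finset.sum_ite_eq',
    Finset.sum_const_zero, Finset.mem_univ, if_true]

lemma collapseB2 (Δ : ℝ) (B : Fin q → Fin q → ℝ) :
    ∑ i1, ∑ i2, ∑ i3, ∑ i4, B i1 i3 * B i2 i4 * mm Δ i1 i2 i3 i4
    = (∑ x, ∑ y, B x y * B x y) + (∑ x, ∑ y, B x x * B y y) + (∑ x, ∑ y, B x y * B y x)
      + ∑ x, B x x * B x x * Δ := by
  simp only [mm, dd, mul_add, Finset.sum_add_distrib, mul_ite, ite_mul, mul_one, mul_zero,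
    one_mul, zero_mul, Finset.sum_ite_irrel, Finset.sum_ite_eq, Finset.sum_ite_eq',
    Finset.sum_const_zero, Finset.mem_univ, if_true]

lemma collapseB3 (Δ : ℝ) (B : Fin q → Fin q → ℝ) :
    ∑ i1, ∑ i2, ∑ i3, ∑ i4, B i1 i4 * B i2 i3 * mm Δ i1 i2 i3 i4
    = (∑ x, ∑ y, B x y * B x y) + (∑ x, ∑ y, B x y * B y x) + (∑ x, ∑ y, B x x * B y y)
      + ∑ x, B x x * B x x * Δ := by
  simp only [mm, dd, mul_add, Finset.sum_add_distrib, mul_ite, ite_mul, mul_one, mul_zero,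
    one_mul, zero_mul, Finset.sum_ite_irrel, Finset.sum_ite_eq, Finset.sum_ite_eq',
    Finset.sum_const_zero, Finset.mem_univ, if_true]

lemma collapseC (Δ : ℝ) (C : Fin q → Fin q → Fin q → Fin q → ℝ) :
    ∑ i1, ∑ i2, ∑ i3, ∑ i4, C i1 i2 i3 i4 * mm Δ i1 i2 i3 i4
    = (∑ x, ∑ y, C x x y y) + (∑ x, ∑ y, C x y x y) + (∑ x, ∑ y, C x y y x)
      + ∑ x, C x x x x * Δ := by
  simp only [mm, dd, mul_add, Finset.sum_add_distrib, mul_ite, ite_mul, mul_one, mul_zero,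
    one_mul, zero_mul, Finset.sum_ite_irrel, Finset.sum_ite_eq, Finset.sum_ite_eq',
    Finset.sum_const_zero, Finset.mem_univ, if_true]

lemma collapseC' (Δ : ℝ) (C : Fin q → Fin q → Fin q → Fin q → ℝ) :
    ∑ i1, ∑ i2, ∑ i3, ∑ i4, Δ * C i1 i2 i3 i4 * mm Δ i1 i2 i3 i4
    = Δ * ((∑ x, ∑ y, C x x y y) + (∑ x, ∑ y, C x y x y) + (∑ x, ∑ y, C x y y x)
        + ∑ x, C x x x x * Δ) := by
  rw [← collapseC Δ C]
  simp only [Finset.mul_sum, mul_assoc]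

lemma key (Δ : ℝ) (Γ : Matrix (Fin q) (Fin q) ℝ) :
    ∑ i1, ∑ i2, ∑ i3, ∑ i4, ∑ j1, ∑ j2, ∑ j3, ∑ j4,
      Γ i1 j1 * Γ i2 j2 * Γ i3 j3 * Γ i4 j4 * (mm Δ i1 i2 i3 i4 * mm Δ j1 j2 j3 j4)
    = 3 * (∑ x, ∑ y, (∑ j, Γ x j * Γ x j) * (∑ j, Γ y j * Γ y j))
      + 6 * (∑ x, ∑ y, (∑ j, Γ x j * Γ y j) * (∑ j, Γ x j * Γ y j))
      + 3 * Δ * (∑ x, (∑ j, Γ x j * Γ x j) * (∑ j, Γ x j * Γ x j))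
      + 3 * Δ * (∑ x, ∑ y, ∑ j, Γ x j * Γ x j * Γ y j * Γ y j)
      + Δ ^ 2 * (∑ x, ∑ j, Γ x j * Γ x j * Γ x j * Γ x j) := by
  set B : Fin q → Fin q → ℝ := fun x y => ∑ j, Γ x j * Γ y j with hB
  set C : Fin q → Fin q → Fin q → Fin q → ℝ :=
    fun a b c d => ∑ j, Γ a j * Γ b j * Γ c j * Γ d j with hC
  have inner : ∀ i1 i2 i3 i4 : Fin q,
      (∑ j1, ∑ j2, ∑ j3, ∑ j4,
        Γ i1 j1 * Γ i2 j2 * Γ i3 j3 * Γ i4 j4 * (mm Δ i1 i2 i3 i4 * mm Δ j1 j2 j3 j4))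
      = (B i1 i2 * B i3 i4 + B i1 i3 * B i2 i4 + B i1 i4 * B i2 i3 + Δ * C i1 i2 i3 i4)
          * mm Δ i1 i2 i3 i4 := by
    intro i1 i2 i3 i4
    rw [← collapse4 Δ (fun j => Γ i1 j) (fun j => Γ i2 j) (fun j => Γ i3 j) (fun j => Γ i4 j)]
    simp only [Finset.sum_mul]
    exact Finset.sum_congr rfl fun _ _ => Finset.sum_congr rfl fun _ _ =>
      Finset.sum_congr rfl fun _ _ => Finset.sum_congr rfl fun _ _ => by ring
  have c1 : (∑ x, ∑ y, B x y * B y x) = ∑ x, ∑ y, B x y * B x y :=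
    Finset.sum_congr rfl fun x _ => Finset.sum_congr rfl fun y _ => by
      have : B y x = B x y := Finset.sum_congr rfl fun j _ => by ring
      rw [this]
  have c2 : (∑ x, ∑ y, C x y x y) = ∑ x, ∑ y, C x x y y :=
    Finset.sum_congr rfl fun x _ => Finset.sum_congr rfl fun y _ =>
      Finset.sum_congr rfl fun j _ => by ring
  have c3 : (∑ x, ∑ y, C x y y x) = ∑ x, ∑ y, C x x y y :=
    Finset.sum_congr rfl fun x _ => Finset.sum_congr rfl fun y _ =>
      Finset.sum_congr rfl fun j _ => by ring
  simp only [inner]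
  simp only [add_mul, Finset.sum_add_distrib]
  rw [collapseB1 Δ B, collapseB2 Δ B, collapseB3 Δ B, collapseC' Δ C]
  simp only [c1, c2, c3]
  simp only [← Finset.sum_mul]
  simp only [hB, hC]
  ring

lemma inj2 {q : ℕ} {x y : Fin q} (h1 : x ≠ y) : Function.Injective ![x, y] := by
  intro i j hij
  fin_cases i <;> fin_cases j <;>
    simp only [Matrix.cons_val_zero, Matrix.cons_val_one, Matrix.head_cons] at hij <;>
    first | rfl | exact absurd hij h1 | exact absurd hij.symm h1

lemma inj3 {q : ℕ} {x y z : Fin q} (h1 : x ≠ y) (h2 : x ≠ z) (h3 : y ≠ z) :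
    Function.Injective ![x, y, z] := by
  intro i j hij
  fin_cases i <;> fin_cases j <;>
    simp only [Matrix.cons_val_zero, Matrix.cons_val_one, Matrix.head_cons,
      Matrix.cons_val_two, Matrix.tail_cons, Matrix.cons_val_succ] at hij <;>
    first
      | rfl
      | exact absurd hij h1 | exact absurd hij h2 | exact absurd hij h3
      | exact absurd hij.symm h1 | exact absurd hij.symm h2 | exact absurd hij.symm h3

set_option maxHeartbeats 1000000 in
lemma inj4 {q : ℕ} {x y z w : Fin q} (h1 : x ≠ y) (h2 : x ≠ z) (h3 : x ≠ w) (h4 : y ≠ z)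
    (h5 : y ≠ w) (h6 : z ≠ w) : Function.Injective ![x, y, z, w] := by
  intro i j hij
  fin_cases i <;> fin_cases j <;>
    simp only [Matrix.cons_val_zero, Matrix.cons_val_one, Matrix.head_cons,
      Matrix.cons_val_two, Matrix.tail_cons, Matrix.cons_val_three, Matrix.head_fin_const,
      Matrix.cons_val_succ] at hij <;>
    first
      | rfl
      | exact absurd hij h1 | exact absurd hij h2 | exact absurd hij h3
      | exact absurd hij h4 | exact absurd hij h5 | exact absurd hij h6
      | exact absurd hij.symm h1 | exact absurd hij.symm h2 | exact absurd hij.symm h3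
      | exact absurd hij.symm h4 | exact absurd hij.symm h5 | exact absurd hij.symm h6


section moments
variable {Ω : Type*} [MeasurableSpace Ω] (μ : Measure Ω) [IsProbabilityMeasure μ]
  {q : ℕ} (Z₁ : Ω → Fin q → ℝ) (Δ : ℝ)

lemma momZ
    (hmean : ∀ j, ∫ ω, Z₁ ω j ∂μ = 0)
    (hvar : ∀ j, ∫ ω, (Z₁ ω j) ^ 2 ∂μ = 1)
    (hfour : ∀ j, ∫ ω, (Z₁ ω j) ^ 4 ∂μ = 3 + Δ)
    (hfact : ∀ (k : ℕ) (l : Fin k → Fin q) (α : Fin k → ℕ), Function.Injective l →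
      (∑ i, α i) ≤ 8 →
      ∫ ω, ∏ i, (Z₁ ω (l i)) ^ (α i) ∂μ = ∏ i, ∫ ω, (Z₁ ω (l i)) ^ (α i) ∂μ)
    (a b c d : Fin q) :
    ∫ ω, Z₁ ω a * Z₁ ω b * Z₁ ω c * Z₁ ω d ∂μ = mm Δ a b c d := by
  have f2 : ∀ (x y : Fin q), x ≠ y → ∀ k l : ℕ, k + l ≤ 8 →
      ∫ ω, Z₁ ω x ^ k * Z₁ ω y ^ l ∂μ = (∫ ω, Z₁ ω x ^ k ∂μ) * ∫ ω, Z₁ ω y ^ l ∂μ := by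
    intro x y hxy k l hkl
    have hinj : Function.Injective ![x, y] := inj2 hxy
    have := hfact 2 ![x, y] ![k, l] hinj (by simpa [Fin.sum_univ_two] using hkl)
    simpa [Fin.prod_univ_two] using this
  have f3 : ∀ (x y z : Fin q), x ≠ y → x ≠ z → y ≠ z → ∀ k l m : ℕ, k + l + m ≤ 8 →
      ∫ ω, Z₁ ω x ^ k * Z₁ ω y ^ l * Z₁ ω z ^ m ∂μ
      = (∫ ω, Z₁ ω x ^ k ∂μ) * (∫ ω, Z₁ ω y ^ l ∂μ) * ∫ ω, Z₁ ω z ^ m ∂μ := by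
    intro x y z hxy hxz hyz k l m hklm
    have hinj : Function.Injective ![x, y, z] := inj3 hxy hxz hyz
    have := hfact 3 ![x, y, z] ![k, l, m] hinj
      (by simpa [Fin.sum_univ_three, add_assoc] using hklm)
    simpa [Fin.prod_univ_three] using this
  have f4 : ∀ (x y z w : Fin q), x ≠ y → x ≠ z → x ≠ w → y ≠ z → y ≠ w → z ≠ w →
      ∫ ω, Z₁ ω x * Z₁ ω y * Z₁ ω z * Z₁ ω w ∂μ
      = (∫ ω, Z₁ ω x ∂μ) * (∫ ω, Z₁ ω y ∂μ) * (∫ ω, Z₁ ω z ∂μ) * ∫ ω, Z₁ ω w ∂μ := by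
    intro x y z w h1 h2 h3 h4 h5 h6
    have hinj : Function.Injective ![x, y, z, w] := inj4 h1 h2 h3 h4 h5 h6
    have := hfact 4 ![x, y, z, w] ![1, 1, 1, 1] hinj (by simp [Fin.sum_univ_four])
    simpa [Fin.prod_univ_four] using this
  by_cases h12 : a = b
  · subst h12
    by_cases h13 : a = c
    · subst h13
      by_cases h14 : a = d
      · subst h14
        simp only [show ∀ ω : Ω, Z₁ ω a * Z₁ ω a * Z₁ ω a * Z₁ ω a = Z₁ ω a ^ 4 from
          fun ω => by ring, hfour a]
        simp [mm, dd]
        ring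
      · simp only [show ∀ ω : Ω, Z₁ ω a * Z₁ ω a * Z₁ ω a * Z₁ ω d
            = Z₁ ω a ^ 3 * Z₁ ω d ^ 1 from fun ω => by ring,
          f2 a d h14 3 1 (by norm_num)]
        simp [mm, dd, pow_one, hmean, h14, Ne.symm h14]
    · by_cases h14 : a = d
      · subst h14
        simp only [show ∀ ω : Ω, Z₁ ω a * Z₁ ω a * Z₁ ω c * Z₁ ω a
            = Z₁ ω a ^ 3 * Z₁ ω c ^ 1 from fun ω => by ring,
          f2 a c h13 3 1 (by norm_num)]
        simp [mm, dd, pow_one, hmean, h13, Ne.symm h13]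
      · by_cases h34 : c = d
        · subst h34
          simp only [show ∀ ω : Ω, Z₁ ω a * Z₁ ω a * Z₁ ω c * Z₁ ω c
              = Z₁ ω a ^ 2 * Z₁ ω c ^ 2 from fun ω => by ring,
            f2 a c h13 2 2 (by norm_num)]
          simp [mm, dd, hvar, h13, Ne.symm h13]
        · simp only [show ∀ ω : Ω, Z₁ ω a * Z₁ ω a * Z₁ ω c * Z₁ ω d
              = Z₁ ω a ^ 2 * Z₁ ω c ^ 1 * Z₁ ω d ^ 1 from fun ω => by ring,
            f3 a c d h13 h14 h34 2 1 1 (by norm_num)]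
          simp [mm, dd, pow_one, hmean, h13, h14, h34, Ne.symm h13, Ne.symm h14, Ne.symm h34]
  · by_cases h13 : a = c
    · subst h13
      by_cases h14 : a = d
      · subst h14
        simp only [show ∀ ω : Ω, Z₁ ω a * Z₁ ω b * Z₁ ω a * Z₁ ω a
            = Z₁ ω a ^ 3 * Z₁ ω b ^ 1 from fun ω => by ring,
          f2 a b h12 3 1 (by norm_num)]
        simp [mm, dd, pow_one, hmean, h12, Ne.symm h12]
      · by_cases h24 : b = d
        · subst h24
          simp only [show ∀ ω : Ω, Z₁ ω a * Z₁ ω b * Z₁ ω a * Z₁ ω b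
              = Z₁ ω a ^ 2 * Z₁ ω b ^ 2 from fun ω => by ring,
            f2 a b h12 2 2 (by norm_num)]
          simp [mm, dd, hvar, h12, Ne.symm h12]
        · simp only [show ∀ ω : Ω, Z₁ ω a * Z₁ ω b * Z₁ ω a * Z₁ ω d
              = Z₁ ω a ^ 2 * Z₁ ω b ^ 1 * Z₁ ω d ^ 1 from fun ω => by ring,
            f3 a b d h12 h14 h24 2 1 1 (by norm_num)]
          simp [mm, dd, pow_one, hmean, h12, h14, h24, Ne.symm h12, Ne.symm h14, Ne.symm h24]
    · by_cases h14 : a = d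
      · subst h14
        by_cases h23 : b = c
        · subst h23
          simp only [show ∀ ω : Ω, Z₁ ω a * Z₁ ω b * Z₁ ω b * Z₁ ω a
              = Z₁ ω a ^ 2 * Z₁ ω b ^ 2 from fun ω => by ring,
            f2 a b h12 2 2 (by norm_num)]
          simp [mm, dd, hvar, h12, Ne.symm h12]
        · simp only [show ∀ ω : Ω, Z₁ ω a * Z₁ ω b * Z₁ ω c * Z₁ ω a
              = Z₁ ω a ^ 2 * Z₁ ω b ^ 1 * Z₁ ω c ^ 1 from fun ω => by ring,
            f3 a b c h12 h13 h23 2 1 1 (by norm_num)]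
          simp [mm, dd, pow_one, hmean, h12, h13, h23, Ne.symm h12, Ne.symm h13, Ne.symm h23]
      · by_cases h23 : b = c
        · subst h23
          by_cases h24 : b = d
          · subst h24
            simp only [show ∀ ω : Ω, Z₁ ω a * Z₁ ω b * Z₁ ω b * Z₁ ω b
                = Z₁ ω b ^ 3 * Z₁ ω a ^ 1 from fun ω => by ring,
              f2 b a (Ne.symm h12) 3 1 (by norm_num)]
            simp [mm, dd, pow_one, hmean, h12, Ne.symm h12]
          · simp only [show ∀ ω : Ω, Z₁ ω a * Z₁ ω b * Z₁ ω b * Z₁ ω d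
                = Z₁ ω b ^ 2 * Z₁ ω a ^ 1 * Z₁ ω d ^ 1 from fun ω => by ring,
              f3 b a d (Ne.symm h12) h24 h14 2 1 1 (by norm_num)]
            simp [mm, dd, pow_one, hmean, h12, h14, h24, Ne.symm h12, Ne.symm h14, Ne.symm h24]
        · by_cases h24 : b = d
          · subst h24
            simp only [show ∀ ω : Ω, Z₁ ω a * Z₁ ω b * Z₁ ω c * Z₁ ω b
                = Z₁ ω b ^ 2 * Z₁ ω a ^ 1 * Z₁ ω c ^ 1 from fun ω => by ring,
              f3 b a c (Ne.symm h12) h23 h13 2 1 1 (by norm_num)]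
            simp [mm, dd, pow_one, hmean, h12, h13, h23, Ne.symm h12, Ne.symm h13, Ne.symm h23]
          · by_cases h34 : c = d
            · subst h34
              simp only [show ∀ ω : Ω, Z₁ ω a * Z₁ ω b * Z₁ ω c * Z₁ ω c
                  = Z₁ ω c ^ 2 * Z₁ ω a ^ 1 * Z₁ ω b ^ 1 from fun ω => by ring,
                f3 c a b (Ne.symm h13) (Ne.symm h23) h12 2 1 1 (by norm_num)]
              simp [mm, dd, pow_one, hmean, h12, h13, h23, Ne.symm h12, Ne.symm h13,
                Ne.symm h23]
            · rw [f4 a b c d h12 h13 h14 h23 h24 h34]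
              simp [mm, dd, hmean, h12, h13, h14, h23, h24, h34, Ne.symm h12, Ne.symm h13,
                Ne.symm h14, Ne.symm h23, Ne.symm h24, Ne.symm h34]

end moments

end S7aux

end

open S7aux

/-- For `Z₁, Z₂` independent copies of a random vector with mean zero, unit
variances, fourth moments `3 + Δ` and product-moment factorization up to total order 8,
and a symmetric matrix `Γ`:
`E[(Z₁ᵀΓZ₂)⁴] = 3 tr²(Γ²) + 6 tr(Γ⁴) + 6Δ tr(Γ² ⊙ Γ²) + Δ² Σ_{i,j} Γ_{ij}⁴`
and consequently `E[(Z₁ᵀΓZ₂)⁴] ≤ 3 tr²(Γ²) + 6 tr(Γ⁴) + 6Δ tr(Γ⁴) + Δ² tr²(Γ²)`. -/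
theorem statement7 {Ω : Type*} [MeasurableSpace Ω] (μ : Measure Ω) [IsProbabilityMeasure μ]
    {q : ℕ} (Z₁ Z₂ : Ω → Fin q → ℝ) (Δ : ℝ) (hΔ : 0 ≤ Δ)
    (hmeas1 : Measurable Z₁) (hmeas2 : Measurable Z₂)
    (hindep : IndepFun Z₁ Z₂ μ)
    (hid : μ.map Z₁ = μ.map Z₂)
    (hmean : ∀ j, ∫ ω, Z₁ ω j ∂μ = 0)
    (hvar : ∀ j, ∫ ω, (Z₁ ω j) ^ 2 ∂μ = 1)
    (hfour : ∀ j, ∫ ω, (Z₁ ω j) ^ 4 ∂μ = 3 + Δ)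
    (hint : ∀ α β : Fin q → ℕ, (∑ j, α j) + (∑ j, β j) ≤ 8 →
      Integrable (fun ω => (∏ j, (Z₁ ω j) ^ (α j)) * ∏ j, (Z₂ ω j) ^ (β j)) μ)
    (hfact : ∀ (k : ℕ) (l : Fin k → Fin q) (α : Fin k → ℕ), Function.Injective l →
      (∑ i, α i) ≤ 8 →
      ∫ ω, ∏ i, (Z₁ ω (l i)) ^ (α i) ∂μ = ∏ i, ∫ ω, (Z₁ ω (l i)) ^ (α i) ∂μ)
    (Γ : Matrix (Fin q) (Fin q) ℝ) (hΓ : Γ.IsSymm) :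
    (∫ ω, (Z₁ ω ⬝ᵥ Γ.mulVec (Z₂ ω)) ^ 4 ∂μ =
        3 * Matrix.trace (Γ ^ 2) ^ 2 + 6 * Matrix.trace (Γ ^ 4) +
          6 * Δ * Matrix.trace (Matrix.hadamard (Γ ^ 2) (Γ ^ 2)) +
          Δ ^ 2 * ∑ i : Fin q, ∑ j : Fin q, Γ i j ^ 4) ∧
      ∫ ω, (Z₁ ω ⬝ᵥ Γ.mulVec (Z₂ ω)) ^ 4 ∂μ ≤
        3 * Matrix.trace (Γ ^ 2) ^ 2 + 6 * Matrix.trace (Γ ^ 4) +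
          6 * Δ * Matrix.trace (Γ ^ 4) + Δ ^ 2 * Matrix.trace (Γ ^ 2) ^ 2 := by
    -- Step 1: pointwise expansion of the fourth power
  have hS4 : ∀ ω, (Z₁ ω ⬝ᵥ Γ.mulVec (Z₂ ω)) ^ 4
      = ∑ i1, ∑ i2, ∑ i3, ∑ i4, ∑ j1, ∑ j2, ∑ j3, ∑ j4,
          BODY Z₁ Z₂ Γ i1 i2 i3 i4 j1 j2 j3 j4 ω := by
    intro ω
    rw [show Z₁ ω ⬝ᵥ Γ.mulVec (Z₂ ω) = ∑ i, Z₁ ω i * ∑ j, Γ i j * Z₂ ω j from rfl, pow4_sum]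
    refine Finset.sum_congr rfl fun i1 _ => Finset.sum_congr rfl fun i2 _ =>
      Finset.sum_congr rfl fun i3 _ => Finset.sum_congr rfl fun i4 _ => ?_
    rw [show (Z₁ ω i1 * ∑ j, Γ i1 j * Z₂ ω j) * (Z₁ ω i2 * ∑ j, Γ i2 j * Z₂ ω j) *
        (Z₁ ω i3 * ∑ j, Γ i3 j * Z₂ ω j) * (Z₁ ω i4 * ∑ j, Γ i4 j * Z₂ ω j)
        = (∑ j, Γ i1 j * Z₂ ω j) * (∑ j, Γ i2 j * Z₂ ω j) * (∑ j, Γ i3 j * Z₂ ω j) *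
          (∑ j, Γ i4 j * Z₂ ω j) * (Z₁ ω i1 * Z₁ ω i2 * Z₁ ω i3 * Z₁ ω i4) from by ring,
      prod4_sum]
    rw [Finset.sum_mul]
    refine Finset.sum_congr rfl fun j1 _ => ?_
    rw [Finset.sum_mul]
    refine Finset.sum_congr rfl fun j2 _ => ?_
    rw [Finset.sum_mul]
    refine Finset.sum_congr rfl fun j3 _ => ?_
    rw [Finset.sum_mul]
    refine Finset.sum_congr rfl fun j4 _ => ?_
    show _ = BODY Z₁ Z₂ Γ i1 i2 i3 i4 j1 j2 j3 j4 ω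
    unfold BODY
    ring
  -- Step 2: integrability of each term
  have hbase : ∀ i1 i2 i3 i4 j1 j2 j3 j4 : Fin q,
      Integrable (BODY Z₁ Z₂ Γ i1 i2 i3 i4 j1 j2 j3 j4) μ := by
    intro i1 i2 i3 i4 j1 j2 j3 j4
    have h := hint (fun j => (if i1 = j then 1 else 0) + (if i2 = j then 1 else 0)
        + (if i3 = j then 1 else 0) + (if i4 = j then 1 else 0))
      (fun j => (if j1 = j then 1 else 0) + (if j2 = j then 1 else 0)
        + (if j3 = j then 1 else 0) + (if j4 = j then 1 else 0))
      (by rw [sum_ind, sum_ind])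
    have h2 : Integrable (fun ω => (Z₁ ω i1 * Z₁ ω i2 * Z₁ ω i3 * Z₁ ω i4) *
        (Z₂ ω j1 * Z₂ ω j2 * Z₂ ω j3 * Z₂ ω j4)) μ := by
      simpa only [prod_ind] using h
    exact h2.const_mul _
  -- Step 3: integrability towers and swapping
  have I7 : ∀ i1 i2 i3 i4 j1 j2 j3 : Fin q,
      Integrable (fun ω => ∑ j4, BODY Z₁ Z₂ Γ i1 i2 i3 i4 j1 j2 j3 j4 ω) μ :=
    fun i1 i2 i3 i4 j1 j2 j3 => integrable_finset_sum _ fun j4 _ => hbase i1 i2 i3 i4 j1 j2 j3 j4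
  have I6 : ∀ i1 i2 i3 i4 j1 j2 : Fin q,
      Integrable (fun ω => ∑ j3, ∑ j4, BODY Z₁ Z₂ Γ i1 i2 i3 i4 j1 j2 j3 j4 ω) μ :=
    fun i1 i2 i3 i4 j1 j2 => integrable_finset_sum _ fun j3 _ => I7 i1 i2 i3 i4 j1 j2 j3
  have I5 : ∀ i1 i2 i3 i4 j1 : Fin q,
      Integrable (fun ω => ∑ j2, ∑ j3, ∑ j4, BODY Z₁ Z₂ Γ i1 i2 i3 i4 j1 j2 j3 j4 ω) μ :=
    fun i1 i2 i3 i4 j1 => integrable_finset_sum _ fun j2 _ => I6 i1 i2 i3 i4 j1 j2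
  have I4 : ∀ i1 i2 i3 i4 : Fin q,
      Integrable (fun ω => ∑ j1, ∑ j2, ∑ j3, ∑ j4, BODY Z₁ Z₂ Γ i1 i2 i3 i4 j1 j2 j3 j4 ω) μ :=
    fun i1 i2 i3 i4 => integrable_finset_sum _ fun j1 _ => I5 i1 i2 i3 i4 j1
  have I3 : ∀ i1 i2 i3 : Fin q,
      Integrable (fun ω => ∑ i4, ∑ j1, ∑ j2, ∑ j3, ∑ j4,
        BODY Z₁ Z₂ Γ i1 i2 i3 i4 j1 j2 j3 j4 ω) μ :=
    fun i1 i2 i3 => integrable_finset_sum _ fun i4 _ => I4 i1 i2 i3 i4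
  have I2 : ∀ i1 i2 : Fin q,
      Integrable (fun ω => ∑ i3, ∑ i4, ∑ j1, ∑ j2, ∑ j3, ∑ j4,
        BODY Z₁ Z₂ Γ i1 i2 i3 i4 j1 j2 j3 j4 ω) μ :=
    fun i1 i2 => integrable_finset_sum _ fun i3 _ => I3 i1 i2 i3
  have I1 : ∀ i1 : Fin q,
      Integrable (fun ω => ∑ i2, ∑ i3, ∑ i4, ∑ j1, ∑ j2, ∑ j3, ∑ j4,
        BODY Z₁ Z₂ Γ i1 i2 i3 i4 j1 j2 j3 j4 ω) μ :=
    fun i1 => integrable_finset_sum _ fun i2 _ => I2 i1 i2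
  have hswap : ∫ ω, (Z₁ ω ⬝ᵥ Γ.mulVec (Z₂ ω)) ^ 4 ∂μ
      = ∑ i1, ∑ i2, ∑ i3, ∑ i4, ∑ j1, ∑ j2, ∑ j3, ∑ j4,
          ∫ ω, BODY Z₁ Z₂ Γ i1 i2 i3 i4 j1 j2 j3 j4 ω ∂μ := by
    simp only [hS4]
    rw [integral_finset_sum _ fun i1 _ => I1 i1]
    refine Finset.sum_congr rfl fun i1 _ => ?_
    rw [integral_finset_sum _ fun i2 _ => I2 i1 i2]
    refine Finset.sum_congr rfl fun i2 _ => ?_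
    rw [integral_finset_sum _ fun i3 _ => I3 i1 i2 i3]
    refine Finset.sum_congr rfl fun i3 _ => ?_
    rw [integral_finset_sum _ fun i4 _ => I4 i1 i2 i3 i4]
    refine Finset.sum_congr rfl fun i4 _ => ?_
    rw [integral_finset_sum _ fun j1 _ => I5 i1 i2 i3 i4 j1]
    refine Finset.sum_congr rfl fun j1 _ => ?_
    rw [integral_finset_sum _ fun j2 _ => I6 i1 i2 i3 i4 j1 j2]
    refine Finset.sum_congr rfl fun j2 _ => ?_
    rw [integral_finset_sum _ fun j3 _ => I7 i1 i2 i3 i4 j1 j2 j3]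
    refine Finset.sum_congr rfl fun j3 _ => ?_
    rw [integral_finset_sum _ fun j4 _ => hbase i1 i2 i3 i4 j1 j2 j3 j4]
  -- Step 4: value of each term
  have hmomZ1 : ∀ a b c d : Fin q,
      ∫ ω, Z₁ ω a * Z₁ ω b * Z₁ ω c * Z₁ ω d ∂μ = mm Δ a b c d :=
    momZ μ Z₁ Δ hmean hvar hfour hfact
  have hmomZ2 : ∀ a b c d : Fin q,
      ∫ ω, Z₂ ω a * Z₂ ω b * Z₂ ω c * Z₂ ω d ∂μ = mm Δ a b c d := by
    intro a b c d
    have hφ : Measurable (fun x : Fin q → ℝ => x a * x b * x c * x d) :=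
      (((measurable_pi_apply a).mul (measurable_pi_apply b)).mul (measurable_pi_apply c)).mul
        (measurable_pi_apply d)
    have e2 : ∫ ω, Z₂ ω a * Z₂ ω b * Z₂ ω c * Z₂ ω d ∂μ
        = ∫ x, x a * x b * x c * x d ∂(μ.map Z₂) :=
      (integral_map hmeas2.aemeasurable hφ.aestronglyMeasurable).symm
    have e1 : ∫ x, x a * x b * x c * x d ∂(μ.map Z₁)
        = ∫ ω, Z₁ ω a * Z₁ ω b * Z₁ ω c * Z₁ ω d ∂μ :=
      integral_map hmeas1.aemeasurable hφ.aestronglyMeasurable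
    rw [e2, ← hid, e1, hmomZ1]
  have hval : ∀ i1 i2 i3 i4 j1 j2 j3 j4 : Fin q,
      ∫ ω, BODY Z₁ Z₂ Γ i1 i2 i3 i4 j1 j2 j3 j4 ω ∂μ
      = Γ i1 j1 * Γ i2 j2 * Γ i3 j3 * Γ i4 j4 * (mm Δ i1 i2 i3 i4 * mm Δ j1 j2 j3 j4) := by
    intro i1 i2 i3 i4 j1 j2 j3 j4
    have hφ : Measurable (fun x : Fin q → ℝ => x i1 * x i2 * x i3 * x i4) :=
      (((measurable_pi_apply i1).mul (measurable_pi_apply i2)).mul (measurable_pi_apply i3)).mul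
        (measurable_pi_apply i4)
    have hψ : Measurable (fun x : Fin q → ℝ => x j1 * x j2 * x j3 * x j4) :=
      (((measurable_pi_apply j1).mul (measurable_pi_apply j2)).mul (measurable_pi_apply j3)).mul
        (measurable_pi_apply j4)
    have hiu : IndepFun (fun ω => Z₁ ω i1 * Z₁ ω i2 * Z₁ ω i3 * Z₁ ω i4)
        (fun ω => Z₂ ω j1 * Z₂ ω j2 * Z₂ ω j3 * Z₂ ω j4) μ := hindep.comp hφ hψ
    have hprod : ∫ ω, (Z₁ ω i1 * Z₁ ω i2 * Z₁ ω i3 * Z₁ ω i4) *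
        (Z₂ ω j1 * Z₂ ω j2 * Z₂ ω j3 * Z₂ ω j4) ∂μ
        = (∫ ω, Z₁ ω i1 * Z₁ ω i2 * Z₁ ω i3 * Z₁ ω i4 ∂μ) *
          ∫ ω, Z₂ ω j1 * Z₂ ω j2 * Z₂ ω j3 * Z₂ ω j4 ∂μ :=
      IndepFun.integral_fun_mul_eq_mul_integral hiu (hφ.comp hmeas1).aestronglyMeasurable
        (hψ.comp hmeas2).aestronglyMeasurable
    unfold BODY
    rw [integral_const_mul, hprod, hmomZ1, hmomZ2]
  -- Step 5: evaluate the full sum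
  have hfinal : ∫ ω, (Z₁ ω ⬝ᵥ Γ.mulVec (Z₂ ω)) ^ 4 ∂μ
      = 3 * (∑ x, ∑ y, (∑ j, Γ x j * Γ x j) * (∑ j, Γ y j * Γ y j))
        + 6 * (∑ x, ∑ y, (∑ j, Γ x j * Γ y j) * (∑ j, Γ x j * Γ y j))
        + 3 * Δ * (∑ x, (∑ j, Γ x j * Γ x j) * (∑ j, Γ x j * Γ x j))
        + 3 * Δ * (∑ x, ∑ y, ∑ j, Γ x j * Γ x j * Γ y j * Γ y j)
        + Δ ^ 2 * (∑ x, ∑ j, Γ x j * Γ x j * Γ x j * Γ x j) := by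
    rw [hswap]
    simp only [hval]
    exact key Δ Γ
  -- bridge to trace expressions
  have hsym : ∀ x y : Fin q, Γ x y = Γ y x := fun x y => (hΓ.apply x y).symm
  have hB2 : ∀ x y, (Γ ^ 2) x y = ∑ j, Γ x j * Γ y j := by
    intro x y
    rw [pow_two]
    simp only [Matrix.mul_apply]
    exact Finset.sum_congr rfl fun j _ => by rw [hsym j y]
  have b2 : Matrix.trace (Γ ^ 2) = ∑ x, ∑ j, Γ x j * Γ x j := by
    simp only [Matrix.trace, Matrix.diag]
    exact Finset.sum_congr rfl fun x _ => hB2 x x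
  have b4 : Matrix.trace (Γ ^ 4)
      = ∑ x, ∑ y, (∑ j, Γ x j * Γ y j) * (∑ j, Γ x j * Γ y j) := by
    have h44 : Γ ^ 4 = Γ ^ 2 * Γ ^ 2 := by
      rw [show (4:ℕ) = 2 + 2 from rfl, pow_add]
    rw [h44]
    simp only [Matrix.trace, Matrix.diag, Matrix.mul_apply]
    refine Finset.sum_congr rfl fun x _ => Finset.sum_congr rfl fun y _ => ?_
    rw [hB2 x y, hB2 y x]
    exact congrArg (fun t => (∑ j, Γ x j * Γ y j) * t)
      (Finset.sum_congr rfl fun j _ => mul_comm _ _)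
  have bh : Matrix.trace (Matrix.hadamard (Γ ^ 2) (Γ ^ 2))
      = ∑ x, (∑ j, Γ x j * Γ x j) * (∑ j, Γ x j * Γ x j) := by
    simp only [Matrix.trace, Matrix.diag, Matrix.hadamard_apply]
    exact Finset.sum_congr rfl fun x _ => by rw [hB2 x x]
  have hH2 : (∑ x, ∑ y, ∑ j, Γ x j * Γ x j * Γ y j * Γ y j)
      = ∑ x, (∑ j, Γ x j * Γ x j) * (∑ j, Γ x j * Γ x j) := by
    calc (∑ x, ∑ y, ∑ j, Γ x j * Γ x j * Γ y j * Γ y j)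
        = ∑ x, ∑ j, ∑ y, Γ x j * Γ x j * Γ y j * Γ y j :=
          Finset.sum_congr rfl fun x _ => Finset.sum_comm
      _ = ∑ j : Fin q, ∑ x : Fin q, ∑ y : Fin q, Γ x j * Γ x j * Γ y j * Γ y j :=
          Finset.sum_comm
      _ = ∑ j : Fin q, (∑ x, Γ x j * Γ x j) * (∑ y, Γ y j * Γ y j) := by
          refine Finset.sum_congr rfl fun j _ => ?_
          rw [Finset.sum_mul_sum]
          exact Finset.sum_congr rfl fun x _ => Finset.sum_congr rfl fun y _ => by ring
      _ = ∑ x, (∑ j, Γ x j * Γ x j) * (∑ j, Γ x j * Γ x j) := by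
          refine Finset.sum_congr rfl fun j _ => ?_
          rw [show (∑ x, Γ x j * Γ x j) = ∑ x, Γ j x * Γ j x from
            Finset.sum_congr rfl fun x _ => by rw [hsym x j]]
  have hF4 : (∑ x, ∑ j, Γ x j * Γ x j * Γ x j * Γ x j)
      = ∑ i : Fin q, ∑ j : Fin q, Γ i j ^ 4 :=
    Finset.sum_congr rfl fun x _ => Finset.sum_congr rfl fun j _ => by ring
  have hsq : (∑ x, ∑ j, Γ x j * Γ x j) ^ 2
      = ∑ x, ∑ y, (∑ j, Γ x j * Γ x j) * (∑ j, Γ y j * Γ y j) := by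
    rw [sq, Finset.sum_mul_sum]
  have part1 : ∫ ω, (Z₁ ω ⬝ᵥ Γ.mulVec (Z₂ ω)) ^ 4 ∂μ =
      3 * Matrix.trace (Γ ^ 2) ^ 2 + 6 * Matrix.trace (Γ ^ 4) +
        6 * Δ * Matrix.trace (Matrix.hadamard (Γ ^ 2) (Γ ^ 2)) +
        Δ ^ 2 * ∑ i : Fin q, ∑ j : Fin q, Γ i j ^ 4 := by
    refine hfinal.trans ?_
    rw [b2, hsq, b4, bh, ← hH2, ← hF4]
    ring
  refine ⟨part1, ?_⟩
  -- the inequality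
  have sqsum : ∀ {n : ℕ} (g : Fin n → ℝ), (∀ j, 0 ≤ g j) →
      (∑ j, g j ^ 2) ≤ (∑ j, g j) ^ 2 := by
    intro n g hg
    rw [sq, Finset.sum_mul_sum]
    refine Finset.sum_le_sum fun j _ => ?_
    have h0 : g j * g j ≤ ∑ y, g j * g y :=
      Finset.single_le_sum (fun y _ => mul_nonneg (hg j) (hg y)) (Finset.mem_univ j)
    calc g j ^ 2 = g j * g j := sq (g j)
      _ ≤ _ := h0
  have ineq1 : Matrix.trace (Matrix.hadamard (Γ ^ 2) (Γ ^ 2)) ≤ Matrix.trace (Γ ^ 4) := by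
    rw [bh, b4]
    refine Finset.sum_le_sum fun x _ => ?_
    exact Finset.single_le_sum
      (f := fun y => (∑ j, Γ x j * Γ y j) * (∑ j, Γ x j * Γ y j))
      (fun y _ => mul_self_nonneg _) (Finset.mem_univ x)
  have ineq2 : (∑ i : Fin q, ∑ j : Fin q, Γ i j ^ 4) ≤ Matrix.trace (Γ ^ 2) ^ 2 := by
    rw [b2]
    have step1 : (∑ i : Fin q, ∑ j : Fin q, Γ i j ^ 4)
        ≤ ∑ i : Fin q, (∑ j, Γ i j * Γ i j) ^ 2 := by
      refine Finset.sum_le_sum fun i _ => ?_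
      have := sqsum (fun j => Γ i j * Γ i j) (fun j => mul_self_nonneg _)
      refine le_trans (le_of_eq ?_) this
      exact Finset.sum_congr rfl fun j _ => by ring
    refine step1.trans ?_
    have step2 := sqsum (fun i => ∑ j, Γ i j * Γ i j)
      (fun i => Finset.sum_nonneg fun j _ => mul_self_nonneg _)
    exact step2
  have k1 : 6 * Δ * Matrix.trace (Matrix.hadamard (Γ ^ 2) (Γ ^ 2))
      ≤ 6 * Δ * Matrix.trace (Γ ^ 4) :=
    mul_le_mul_of_nonneg_left ineq1 (by positivity)
  have k2 : Δ ^ 2 * (∑ i : Fin q, ∑ j : Fin q, Γ i j ^ 4)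
      ≤ Δ ^ 2 * Matrix.trace (Γ ^ 2) ^ 2 :=
    mul_le_mul_of_nonneg_left ineq2 (sq_nonneg Δ)
  rw [part1]
  linarith
end

section
/- Let Σ ∈ ℝ^{p×p} be symmetric positive definite with largest eigenvalue λ₁(Σ) and smallest eigenvalue λ_p(Σ). Let A₁ be a set of pairs (i,j) with 1 ≤ i < j ≤ p, let A₂ be the set of indices in {1, …, p} that appear in no pair of A₁, and suppose K₀ ≥ 1 is an integer such that every index appears in at most K₀ pairs of A₁. Define P_O = Σ_{(i,j)∈A₁} P_{ij}ᵀ (P_{ij} Σ P_{ij}ᵀ)⁻¹ P_{ij} + Σ_{i∈A₂} P_iᵀ (P_i Σ P_iᵀ)⁻¹ P_i. Then P_O is symmetric positive definite and for every unit vector ζ ∈ ℝᵖ, 1/λ₁(Σ) ≤ ζᵀ P_O ζ ≤ K₀/λ_p(Σ); equivalently, every eigenvalue of P_O lies in the interval [1/λ₁(Σ), K₀/λ_p(Σ)]. -/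
open MeasureTheory ProbabilityTheory Filter Matrix
open scoped BigOperators Classical

noncomputable section

namespace Aux9

open Matrix
open scoped MatrixOrder

lemma dot_sandwich {m q : ℕ} (A : Matrix (Fin m) (Fin q) ℝ) (M : Matrix (Fin m) (Fin m) ℝ)
    (x : Fin q → ℝ) :
    x ⬝ᵥ (Aᵀ * M * A) *ᵥ x = (A *ᵥ x) ⬝ᵥ M *ᵥ (A *ᵥ x) := by
  rw [← mulVec_mulVec, ← mulVec_mulVec, dotProduct_mulVec, vecMul_transpose]

lemma sum_mulVec {p : ℕ} {ι : Type*} (s : Finset ι) (A : ι → Matrix (Fin p) (Fin p) ℝ)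
    (v : Fin p → ℝ) : (∑ i ∈ s, A i) *ᵥ v = ∑ i ∈ s, A i *ᵥ v := by
  funext c
  simp only [Matrix.mulVec, dotProduct, Finset.sum_apply, Matrix.sum_apply, Finset.sum_mul]
  rw [Finset.sum_comm]

lemma dot_finset_sum {p : ℕ} {ι : Type*} (s : Finset ι) (v : Fin p → ℝ) (w : ι → Fin p → ℝ) :
    v ⬝ᵥ ∑ i ∈ s, w i = ∑ i ∈ s, v ⬝ᵥ w i := by
  simp only [dotProduct, Finset.sum_apply, Finset.mul_sum]
  rw [Finset.sum_comm]

lemma rayleigh {n : ℕ} {M : Matrix (Fin n) (Fin n) ℝ} (hM : M.IsHermitian)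
    {a b : ℝ} (ha : ∀ i, a ≤ hM.eigenvalues i) (hb : ∀ i, hM.eigenvalues i ≤ b)
    (x : Fin n → ℝ) :
    a * (x ⬝ᵥ x) ≤ x ⬝ᵥ M *ᵥ x ∧ x ⬝ᵥ M *ᵥ x ≤ b * (x ⬝ᵥ x) := by
  set U : Matrix (Fin n) (Fin n) ℝ := (hM.eigenvectorUnitary : Matrix (Fin n) (Fin n) ℝ) with hU
  have hstar : star U = Uᵀ := by
    ext i j; simp [Matrix.star_eq_conjTranspose, Matrix.conjTranspose_apply]
  have hUU : U * star U = 1 := (Matrix.mem_unitaryGroup_iff).mp hM.eigenvectorUnitary.2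
  set y : Fin n → ℝ := Uᵀ *ᵥ x with hy
  have hform : x ⬝ᵥ M *ᵥ x = ∑ i, hM.eigenvalues i * y i ^ 2 := by
    conv_lhs => rw [hM.spectral_theorem]
    rw [Unitary.conjStarAlgAut_apply, ← hU]
    rw [hstar, show (U * diagonal (RCLike.ofReal ∘ hM.eigenvalues) * Uᵀ)
        = ((Uᵀ)ᵀ * diagonal (RCLike.ofReal ∘ hM.eigenvalues) * Uᵀ) by rw [transpose_transpose],
      dot_sandwich]
    simp only [dotProduct, mulVec_diagonal, Function.comp, RCLike.ofReal_real_eq_id, id_eq, sq]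
    exact Finset.sum_congr rfl fun i _ => by rw [hy]; ring
  have hnorm : x ⬝ᵥ x = ∑ i, y i ^ 2 := by
    have : y ⬝ᵥ y = x ⬝ᵥ (U * 1 * Uᵀ) *ᵥ x := by
      rw [show (U * 1 * Uᵀ) = ((Uᵀ)ᵀ * 1 * Uᵀ) by rw [transpose_transpose], dot_sandwich]
      simp [hy]
    rw [← hstar] at this
    simp only [mul_one, hUU, one_mulVec] at this
    rw [← this]
    simp [dotProduct, sq]
  constructor
  · rw [hform, hnorm, Finset.mul_sum]
    exact Finset.sum_le_sum fun i _ => mul_le_mul_of_nonneg_right (ha i) (sq_nonneg _)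
  · rw [hform, hnorm, Finset.mul_sum]
    exact Finset.sum_le_sum fun i _ => mul_le_mul_of_nonneg_right (hb i) (sq_nonneg _)

lemma quad_inv_bounds {n : ℕ} {B : Matrix (Fin n) (Fin n) ℝ} (hB : B.PosDef)
    {a b : ℝ} (ha : 0 < a)
    (h : ∀ v : Fin n → ℝ, a * (v ⬝ᵥ v) ≤ v ⬝ᵥ B *ᵥ v ∧ v ⬝ᵥ B *ᵥ v ≤ b * (v ⬝ᵥ v))
    (x : Fin n → ℝ) :
    0 ≤ x ⬝ᵥ B⁻¹ *ᵥ x ∧ (x ⬝ᵥ x) / b ≤ x ⬝ᵥ B⁻¹ *ᵥ x ∧ x ⬝ᵥ B⁻¹ *ᵥ x ≤ (x ⬝ᵥ x) / a := by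
  have hBt : Bᵀ = B := by
    have := hB.1
    rwa [IsHermitian, conjTranspose_eq_transpose_of_trivial] at this
  set z : Fin n → ℝ := B⁻¹ *ᵥ x with hz
  have hBz : B *ᵥ z = x := by
    rw [hz, mulVec_mulVec, Matrix.mul_nonsing_inv _ hB.det_pos.ne'.isUnit, one_mulVec]
  have hq : x ⬝ᵥ z = z ⬝ᵥ B *ᵥ z := by
    rw [← hBz, dotProduct_comm, dotProduct_mulVec, ← hBt, ← mulVec_transpose]
  set R := CFC.sqrt B with hR
  have hRt : Rᵀ = R := by
    have := (nonneg_iff_posSemidef.mp (CFC.sqrt_nonneg B)).1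
    rwa [IsHermitian, conjTranspose_eq_transpose_of_trivial] at this
  have hRR : R * R = B := CFC.sqrt_mul_sqrt_self B (nonneg_iff_posSemidef.mpr hB.posSemidef)
  set w : Fin n → ℝ := R *ᵥ z with hw
  have hw1 : w ⬝ᵥ w = z ⬝ᵥ B *ᵥ z := by
    have : z ⬝ᵥ (Rᵀ * 1 * R) *ᵥ z = w ⬝ᵥ 1 *ᵥ w := dot_sandwich R 1 z
    rw [hRt, mul_one, hRR] at this
    rw [this, one_mulVec]
  have hw2 : w ⬝ᵥ B *ᵥ w = x ⬝ᵥ x := by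
    have h1 : z ⬝ᵥ (Rᵀ * B * R) *ᵥ z = w ⬝ᵥ B *ᵥ w := dot_sandwich R B z
    have h2 : z ⬝ᵥ (Bᵀ * 1 * B) *ᵥ z = (B *ᵥ z) ⬝ᵥ 1 *ᵥ (B *ᵥ z) := dot_sandwich B 1 z
    rw [hBt, mul_one, hBz, one_mulVec] at h2
    rw [hRt, show R * B * R = B * B by rw [← hRR]; noncomm_ring] at h1
    rw [← h1, ← h2]
  have key := h w
  rw [hw1, hw2] at key
  have dsn : ∀ v : Fin n → ℝ, 0 ≤ v ⬝ᵥ v := fun v =>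
    Finset.sum_nonneg fun i _ => mul_self_nonneg _
  have hq0 : 0 ≤ x ⬝ᵥ B⁻¹ *ᵥ x := by
    show 0 ≤ x ⬝ᵥ z
    rw [hq]
    have := (h z).1
    nlinarith [dsn z]
  refine ⟨hq0, ?_, ?_⟩
  · rcases le_or_gt b 0 with hb | hb
    · exact le_trans (div_nonpos_of_nonneg_of_nonpos (dsn x) hb) hq0
    · rw [div_le_iff₀ hb, mul_comm]
      show x ⬝ᵥ x ≤ b * (x ⬝ᵥ z)
      rw [hq]; exact key.2
  · rw [le_div_iff₀ ha, mul_comm]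
    show a * (x ⬝ᵥ z) ≤ x ⬝ᵥ x
    rw [hq]; exact key.1

variable {p : ℕ}

lemma P2t_mulVec (i j : Fin p) (v : Fin 2 → ℝ) :
    (PHT.P2 i j)ᵀ *ᵥ v = fun c => (if c = i then v 0 else 0) + (if c = j then v 1 else 0) := by
  funext c
  simp [Matrix.mulVec, dotProduct, Fin.sum_univ_two, PHT.P2, transpose_apply, ite_mul, mul_comm]

lemma P2_mulVec (i j : Fin p) (ζ : Fin p → ℝ) :
    PHT.P2 i j *ᵥ ζ = ![ζ i, ζ j] := by
  funext r
  fin_cases r <;>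
    simp [PHT.P2, Matrix.mulVec, dotProduct, ite_mul, Finset.sum_ite_eq']

lemma P2t_norm (i j : Fin p) (hij : i ≠ j) (v : Fin 2 → ℝ) :
    ((PHT.P2 i j)ᵀ *ᵥ v) ⬝ᵥ ((PHT.P2 i j)ᵀ *ᵥ v) = v ⬝ᵥ v := by
  rw [P2t_mulVec]
  have key : ∀ c, ((if c = i then v 0 else 0) + (if c = j then v 1 else 0)) *
      ((if c = i then v 0 else 0) + (if c = j then v 1 else 0)) =
      (if c = i then v 0 * v 0 else 0) + (if c = j then v 1 * v 1 else 0) := by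
    intro c
    by_cases h1 : c = i <;> by_cases h2 : c = j
    · exact absurd (h1.symm.trans h2) hij
    all_goals simp_all [Ne.symm hij]
  show (∑ c, _) = _
  rw [Finset.sum_congr rfl fun c _ => key c, Finset.sum_add_distrib,
    Finset.sum_ite_eq' Finset.univ i, Finset.sum_ite_eq' Finset.univ j]
  simp [dotProduct, Fin.sum_univ_two]

lemma P2t_ne_zero (i j : Fin p) (hij : i ≠ j) {v : Fin 2 → ℝ} (hv : v ≠ 0) :
    (PHT.P2 i j)ᵀ *ᵥ v ≠ 0 := by
  rw [P2t_mulVec]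
  intro h
  apply hv
  have hi := congrFun h i
  have hj := congrFun h j
  simp [hij, hij.symm] at hi hj
  funext r
  fin_cases r
  · exact hi
  · exact hj

lemma P1t_mulVec (i : Fin p) (v : Fin 1 → ℝ) :
    (PHT.P1 i)ᵀ *ᵥ v = fun c => if c = i then v 0 else 0 := by
  funext c
  simp [Matrix.mulVec, dotProduct, PHT.P1, ite_mul]

lemma P1_mulVec (i : Fin p) (ζ : Fin p → ℝ) :
    PHT.P1 i *ᵥ ζ = fun _ => ζ i := by
  funext r
  simp [PHT.P1, Matrix.mulVec, dotProduct, ite_mul, Finset.sum_ite_eq']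

lemma P1t_norm (i : Fin p) (v : Fin 1 → ℝ) :
    ((PHT.P1 i)ᵀ *ᵥ v) ⬝ᵥ ((PHT.P1 i)ᵀ *ᵥ v) = v ⬝ᵥ v := by
  rw [P1t_mulVec]
  show (∑ c, _) = _
  rw [Finset.sum_congr rfl (g := fun c => if c = i then v 0 * v 0 else 0)
    fun c _ => by by_cases h : c = i <;> simp [h],
    Finset.sum_ite_eq' Finset.univ i]
  simp [dotProduct]

lemma P1t_ne_zero (i : Fin p) {v : Fin 1 → ℝ} (hv : v ≠ 0) :
    (PHT.P1 i)ᵀ *ᵥ v ≠ 0 := by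
  rw [P1t_mulVec]
  intro h
  apply hv
  have hi := congrFun h i
  simp at hi
  funext r
  fin_cases r
  exact hi

lemma herm_of_sandwich {q : ℕ} {S : Matrix (Fin p) (Fin p) ℝ} (hS : Sᵀ = S)
    (P : Matrix (Fin q) (Fin p) ℝ) : (P * S * Pᵀ)ᵀ = P * S * Pᵀ := by
  rw [transpose_mul, transpose_mul, transpose_transpose, hS, Matrix.mul_assoc]

lemma sandwich_posDef {q : ℕ} {S : Matrix (Fin p) (Fin p) ℝ} (hPD : S.PosDef)
    (P : Matrix (Fin q) (Fin p) ℝ) (hP : ∀ v : Fin q → ℝ, v ≠ 0 → Pᵀ *ᵥ v ≠ 0) :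
    (P * S * Pᵀ).PosDef := by
  have hSt : Sᵀ = S := by
    have := hPD.1
    rwa [IsHermitian, conjTranspose_eq_transpose_of_trivial] at this
  refine Matrix.PosDef.of_dotProduct_mulVec_pos ?_ ?_
  · rw [IsHermitian, conjTranspose_eq_transpose_of_trivial]
    exact herm_of_sandwich hSt P
  · intro v hv
    have hd : v ⬝ᵥ (P * S * Pᵀ) *ᵥ v = (Pᵀ *ᵥ v) ⬝ᵥ S *ᵥ (Pᵀ *ᵥ v) := by
      have := dot_sandwich Pᵀ S v
      rwa [transpose_transpose] at this
    have hpos := hPD.dotProduct_mulVec_pos (hP v hv)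
    rw [star_trivial] at hpos
    rw [star_trivial, hd]
    exact hpos

lemma sandwich_inv_quad {q : ℕ} {S : Matrix (Fin p) (Fin p) ℝ} (hPD : S.PosDef)
    {lam1 lamp : ℝ} (hlp : 0 < lamp)
    (hray : ∀ x : Fin p → ℝ, lamp * (x ⬝ᵥ x) ≤ x ⬝ᵥ S *ᵥ x ∧ x ⬝ᵥ S *ᵥ x ≤ lam1 * (x ⬝ᵥ x))
    (P : Matrix (Fin q) (Fin p) ℝ) (hP0 : ∀ v : Fin q → ℝ, v ≠ 0 → Pᵀ *ᵥ v ≠ 0)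
    (hPn : ∀ v : Fin q → ℝ, (Pᵀ *ᵥ v) ⬝ᵥ (Pᵀ *ᵥ v) = v ⬝ᵥ v)
    (ζ : Fin p → ℝ) :
    ((P *ᵥ ζ) ⬝ᵥ (P *ᵥ ζ)) / lam1 ≤ ζ ⬝ᵥ (Pᵀ * (P * S * Pᵀ)⁻¹ * P) *ᵥ ζ ∧
      ζ ⬝ᵥ (Pᵀ * (P * S * Pᵀ)⁻¹ * P) *ᵥ ζ ≤ ((P *ᵥ ζ) ⬝ᵥ (P *ᵥ ζ)) / lamp := by
  have hB : (P * S * Pᵀ).PosDef := sandwich_posDef hPD P hP0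
  have hbounds : ∀ v : Fin q → ℝ,
      lamp * (v ⬝ᵥ v) ≤ v ⬝ᵥ (P * S * Pᵀ) *ᵥ v ∧
        v ⬝ᵥ (P * S * Pᵀ) *ᵥ v ≤ lam1 * (v ⬝ᵥ v) := by
    intro v
    have hd : v ⬝ᵥ (P * S * Pᵀ) *ᵥ v = (Pᵀ *ᵥ v) ⬝ᵥ S *ᵥ (Pᵀ *ᵥ v) := by
      have := dot_sandwich Pᵀ S v
      rwa [transpose_transpose] at this
    rw [hd, ← hPn v]
    exact hray _
  have hmain := quad_inv_bounds hB hlp hbounds (P *ᵥ ζ)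
  rw [dot_sandwich P ((P * S * Pᵀ)⁻¹) ζ]
  exact ⟨hmain.2.1, hmain.2.2⟩

end Aux9


/-- For `Σ` symmetric positive definite with largest eigenvalue `lam1` and
smallest eigenvalue `lamp`, pairs `A₁` with each index appearing in at most `K₀` pairs,
and `A₂` the indices appearing in no pair, the matrix `P_O` is symmetric positive
definite and `1/λ₁(Σ) ≤ ζᵀ P_O ζ ≤ K₀/λ_p(Σ)` for every unit vector `ζ`; equivalently its
eigenvalues all lie in `[1/λ₁(Σ), K₀/λ_p(Σ)]`. -/
theorem statement9 {p : ℕ} (hp : 0 < p) (S : Matrix (Fin p) (Fin p) ℝ)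
    (hPD : S.PosDef)
    (A1 : Finset (Fin p × Fin p)) (hA1 : ∀ ij ∈ A1, ij.1 < ij.2)
    (K0 : ℕ) (hK0 : 1 ≤ K0)
    (hK0card : ∀ i : Fin p, (A1.filter fun ij => ij.1 = i ∨ ij.2 = i).card ≤ K0)
    (A2 : Finset (Fin p))
    (hA2 : A2 = Finset.univ.filter fun i => ∀ ij ∈ A1, ij.1 ≠ i ∧ ij.2 ≠ i)
    (lam1 lamp : ℝ)
    (hlam1 : (∀ i, hPD.1.eigenvalues i ≤ lam1) ∧ ∃ i, hPD.1.eigenvalues i = lam1)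
    (hlamp : (∀ i, lamp ≤ hPD.1.eigenvalues i) ∧ ∃ i, hPD.1.eigenvalues i = lamp) :
    (PHT.PO S A1 A2).IsSymm ∧ (PHT.PO S A1 A2).PosDef ∧
      (∀ ζ : Fin p → ℝ, (∑ i, ζ i ^ 2) = 1 →
        1 / lam1 ≤ ζ ⬝ᵥ (PHT.PO S A1 A2).mulVec ζ ∧
          ζ ⬝ᵥ (PHT.PO S A1 A2).mulVec ζ ≤ (K0 : ℝ) / lamp) ∧
      ∀ hPO : (PHT.PO S A1 A2).IsHermitian, ∀ i,
        1 / lam1 ≤ hPO.eigenvalues i ∧ hPO.eigenvalues i ≤ (K0 : ℝ) / lamp := by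
  classical
  have hlam1pos : 0 < lam1 := by
    obtain ⟨i, hi⟩ := hlam1.2
    exact hi ▸ hPD.eigenvalues_pos i
  have hlamppos : 0 < lamp := by
    obtain ⟨i, hi⟩ := hlamp.2
    exact hi ▸ hPD.eigenvalues_pos i
  have hSt : Sᵀ = S := by
    have := hPD.1
    rwa [Matrix.IsHermitian, Matrix.conjTranspose_eq_transpose_of_trivial] at this
  have hray : ∀ x : Fin p → ℝ,
      lamp * (x ⬝ᵥ x) ≤ x ⬝ᵥ S *ᵥ x ∧ x ⬝ᵥ S *ᵥ x ≤ lam1 * (x ⬝ᵥ x) :=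
    fun x => Aux9.rayleigh hPD.1 hlamp.1 hlam1.1 x
  -- quadratic form decomposition
  have hPOval : ∀ ζ : Fin p → ℝ, ζ ⬝ᵥ (PHT.PO S A1 A2) *ᵥ ζ =
      (∑ ij ∈ A1, ζ ⬝ᵥ ((PHT.P2 ij.1 ij.2)ᵀ * (PHT.P2 ij.1 ij.2 * S * (PHT.P2 ij.1 ij.2)ᵀ)⁻¹ *
          PHT.P2 ij.1 ij.2) *ᵥ ζ) +
        ∑ i ∈ A2, ζ ⬝ᵥ ((PHT.P1 i)ᵀ * (PHT.P1 i * S * (PHT.P1 i)ᵀ)⁻¹ * PHT.P1 i) *ᵥ ζ := by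
    intro ζ
    rw [PHT.PO, Matrix.add_mulVec, dotProduct_add, Aux9.sum_mulVec, Aux9.sum_mulVec,
      Aux9.dot_finset_sum, Aux9.dot_finset_sum]
  -- per-term bounds
  have pairBound : ∀ ζ : Fin p → ℝ, ∀ ij ∈ A1,
      (ζ ij.1 ^ 2 + ζ ij.2 ^ 2) / lam1 ≤
        ζ ⬝ᵥ ((PHT.P2 ij.1 ij.2)ᵀ * (PHT.P2 ij.1 ij.2 * S * (PHT.P2 ij.1 ij.2)ᵀ)⁻¹ *
          PHT.P2 ij.1 ij.2) *ᵥ ζ ∧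
      ζ ⬝ᵥ ((PHT.P2 ij.1 ij.2)ᵀ * (PHT.P2 ij.1 ij.2 * S * (PHT.P2 ij.1 ij.2)ᵀ)⁻¹ *
          PHT.P2 ij.1 ij.2) *ᵥ ζ ≤ (ζ ij.1 ^ 2 + ζ ij.2 ^ 2) / lamp := by
    intro ζ ij hij
    have hne : ij.1 ≠ ij.2 := (hA1 ij hij).ne
    have hnorm : (PHT.P2 ij.1 ij.2 *ᵥ ζ) ⬝ᵥ (PHT.P2 ij.1 ij.2 *ᵥ ζ) =
        ζ ij.1 ^ 2 + ζ ij.2 ^ 2 := by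
      rw [Aux9.P2_mulVec]
      simp [dotProduct, Fin.sum_univ_two, sq]
    have := Aux9.sandwich_inv_quad hPD hlamppos hray (PHT.P2 ij.1 ij.2)
      (fun v hv => Aux9.P2t_ne_zero ij.1 ij.2 hne hv)
      (fun v => Aux9.P2t_norm ij.1 ij.2 hne v) ζ
    rwa [hnorm] at this
  have singleBound : ∀ ζ : Fin p → ℝ, ∀ i ∈ A2,
      ζ i ^ 2 / lam1 ≤ ζ ⬝ᵥ ((PHT.P1 i)ᵀ * (PHT.P1 i * S * (PHT.P1 i)ᵀ)⁻¹ * PHT.P1 i) *ᵥ ζ ∧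
      ζ ⬝ᵥ ((PHT.P1 i)ᵀ * (PHT.P1 i * S * (PHT.P1 i)ᵀ)⁻¹ * PHT.P1 i) *ᵥ ζ ≤ ζ i ^ 2 / lamp := by
    intro ζ i _
    have hnorm : (PHT.P1 i *ᵥ ζ) ⬝ᵥ (PHT.P1 i *ᵥ ζ) = ζ i ^ 2 := by
      rw [Aux9.P1_mulVec]
      simp [dotProduct, sq]
    have := Aux9.sandwich_inv_quad hPD hlamppos hray (PHT.P1 i)
      (fun v hv => Aux9.P1t_ne_zero i hv) (fun v => Aux9.P1t_norm i v) ζ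
    rwa [hnorm] at this
  -- counting identity
  set m : Fin p → ℝ := fun i =>
    ((A1.filter fun ij => ij.1 = i ∨ ij.2 = i).card : ℝ) + (if i ∈ A2 then 1 else 0) with hm
  have count : ∀ ζ : Fin p → ℝ,
      (∑ ij ∈ A1, (ζ ij.1 ^ 2 + ζ ij.2 ^ 2)) + ∑ i ∈ A2, ζ i ^ 2 = ∑ i, m i * ζ i ^ 2 := by
    intro ζ
    have step1 : ∑ ij ∈ A1, (ζ ij.1 ^ 2 + ζ ij.2 ^ 2) =
        ∑ ij ∈ A1, ∑ i, (if ij.1 = i ∨ ij.2 = i then ζ i ^ 2 else 0) := by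
      refine Finset.sum_congr rfl fun ij hij => ?_
      have hne : ij.1 ≠ ij.2 := (hA1 ij hij).ne
      have : ∀ i, (if ij.1 = i ∨ ij.2 = i then ζ i ^ 2 else 0) =
          (if ij.1 = i then ζ i ^ 2 else 0) + (if ij.2 = i then ζ i ^ 2 else 0) := by
        intro i
        by_cases h1 : ij.1 = i <;> by_cases h2 : ij.2 = i
        · exact absurd (h1.trans h2.symm) hne
        all_goals simp [h1, h2]
      rw [Finset.sum_congr rfl fun i _ => this i, Finset.sum_add_distrib,
        Finset.sum_ite_eq Finset.univ ij.1, Finset.sum_ite_eq Finset.univ ij.2]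
      simp
    have step2 : ∑ ij ∈ A1, ∑ i, (if ij.1 = i ∨ ij.2 = i then ζ i ^ 2 else 0) =
        ∑ i, ((A1.filter fun ij => ij.1 = i ∨ ij.2 = i).card : ℝ) * ζ i ^ 2 := by
      rw [Finset.sum_comm]
      refine Finset.sum_congr rfl fun i _ => ?_
      rw [← Finset.sum_filter, Finset.sum_const, nsmul_eq_mul]
    have step3 : ∑ i ∈ A2, ζ i ^ 2 = ∑ i, (if i ∈ A2 then (1 : ℝ) else 0) * ζ i ^ 2 := by
      have hthis : ∀ i, (if i ∈ A2 then (1:ℝ) else 0) * ζ i ^ 2 =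
          if i ∈ A2 then ζ i ^ 2 else 0 := fun i => by by_cases h : i ∈ A2 <;> simp [h]
      have h3 : ∑ i : Fin p, (if i ∈ A2 then (1:ℝ) else 0) * ζ i ^ 2 = ∑ i ∈ A2, ζ i ^ 2 := by
        rw [Finset.sum_congr rfl fun i _ => hthis i, Finset.sum_ite_mem, Finset.univ_inter]
      exact h3.symm
    rw [step1, step2, step3, ← Finset.sum_add_distrib]
    exact Finset.sum_congr rfl fun i _ => by rw [hm, add_mul]
  have hm1 : ∀ i, (1 : ℝ) ≤ m i := by
    intro i
    by_cases h : i ∈ A2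
    · simp only [hm, h, if_true]
      have : (0 : ℝ) ≤ ((A1.filter fun ij => ij.1 = i ∨ ij.2 = i).card : ℝ) := Nat.cast_nonneg _
      linarith
    · have hnonempty : (A1.filter fun ij => ij.1 = i ∨ ij.2 = i).Nonempty := by
        rw [hA2] at h
        simp only [Finset.mem_filter, Finset.mem_univ, true_and, not_forall] at h
        obtain ⟨ij, hij, hor⟩ := h
        refine ⟨ij, Finset.mem_filter.mpr ⟨hij, ?_⟩⟩
        by_contra hcon
        push_neg at hcon
        exact hor ⟨hcon.1, hcon.2⟩
      have hcard : 1 ≤ (A1.filter fun ij => ij.1 = i ∨ ij.2 = i).card :=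
        Finset.card_pos.mpr hnonempty
      simp only [hm, h, if_false, add_zero]
      exact_mod_cast hcard
  have hmK : ∀ i, m i ≤ (K0 : ℝ) := by
    intro i
    by_cases h : i ∈ A2
    · have hempty : (A1.filter fun ij => ij.1 = i ∨ ij.2 = i) = ∅ := by
        rw [hA2] at h
        simp only [Finset.mem_filter, Finset.mem_univ, true_and] at h
        refine Finset.filter_eq_empty_iff.mpr fun ij hij => ?_
        have := h ij hij
        push_neg
        exact this
      simp only [hm, h, if_true, hempty, Finset.card_empty, Nat.cast_zero, zero_add]
      exact_mod_cast hK0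
    · simp only [hm, h, if_false, add_zero]
      exact_mod_cast hK0card i
  -- main quadratic form bounds, unnormalized
  have main : ∀ ζ : Fin p → ℝ,
      (∑ i, ζ i ^ 2) / lam1 ≤ ζ ⬝ᵥ (PHT.PO S A1 A2) *ᵥ ζ ∧
        ζ ⬝ᵥ (PHT.PO S A1 A2) *ᵥ ζ ≤ (K0 : ℝ) * (∑ i, ζ i ^ 2) / lamp := by
    intro ζ
    rw [hPOval ζ]
    constructor
    · calc (∑ i, ζ i ^ 2) / lam1 ≤ (∑ i, m i * ζ i ^ 2) / lam1 := by
            apply div_le_div_of_nonneg_right ?_ hlam1pos.le |>.trans_eq rfl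
            exact Finset.sum_le_sum fun i _ =>
              le_mul_of_one_le_left (sq_nonneg _) (hm1 i)
        _ = (∑ ij ∈ A1, (ζ ij.1 ^ 2 + ζ ij.2 ^ 2)) / lam1 + (∑ i ∈ A2, ζ i ^ 2) / lam1 := by
            rw [← count ζ, add_div]
        _ = (∑ ij ∈ A1, (ζ ij.1 ^ 2 + ζ ij.2 ^ 2) / lam1) +
              ∑ i ∈ A2, ζ i ^ 2 / lam1 := by
            rw [Finset.sum_div, Finset.sum_div]
        _ ≤ _ := add_le_add
            (Finset.sum_le_sum fun ij hij => (pairBound ζ ij hij).1)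
            (Finset.sum_le_sum fun i hi => (singleBound ζ i hi).1)
    · calc _ ≤ (∑ ij ∈ A1, (ζ ij.1 ^ 2 + ζ ij.2 ^ 2) / lamp) +
              ∑ i ∈ A2, ζ i ^ 2 / lamp := add_le_add
            (Finset.sum_le_sum fun ij hij => (pairBound ζ ij hij).2)
            (Finset.sum_le_sum fun i hi => (singleBound ζ i hi).2)
        _ = (∑ i, m i * ζ i ^ 2) / lamp := by
            rw [← Finset.sum_div, ← Finset.sum_div, ← add_div, count ζ]
        _ ≤ (K0 : ℝ) * (∑ i, ζ i ^ 2) / lamp := by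
            apply div_le_div_of_nonneg_right ?_ hlamppos.le |>.trans_eq rfl
            rw [Finset.mul_sum]
            exact Finset.sum_le_sum fun i _ =>
              mul_le_mul_of_nonneg_right (hmK i) (sq_nonneg _)
  -- symmetry
  have hsymm : (PHT.PO S A1 A2).IsSymm := by
    show (PHT.PO S A1 A2)ᵀ = PHT.PO S A1 A2
    rw [PHT.PO, Matrix.transpose_add, Matrix.transpose_sum, Matrix.transpose_sum]
    congr 1
    · refine Finset.sum_congr rfl fun ij hij => ?_
      have hne : ij.1 ≠ ij.2 := (hA1 ij hij).ne
      have hB := Aux9.sandwich_posDef hPD (PHT.P2 ij.1 ij.2)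
        (fun v hv => Aux9.P2t_ne_zero ij.1 ij.2 hne hv)
      have hBt : (PHT.P2 ij.1 ij.2 * S * (PHT.P2 ij.1 ij.2)ᵀ)ᵀ =
          PHT.P2 ij.1 ij.2 * S * (PHT.P2 ij.1 ij.2)ᵀ := Aux9.herm_of_sandwich hSt _
      rw [Matrix.transpose_mul, Matrix.transpose_mul, Matrix.transpose_transpose,
        Matrix.transpose_nonsing_inv, hBt, ← Matrix.mul_assoc]
    · refine Finset.sum_congr rfl fun i _ => ?_
      have hBt : (PHT.P1 i * S * (PHT.P1 i)ᵀ)ᵀ =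
          PHT.P1 i * S * (PHT.P1 i)ᵀ := Aux9.herm_of_sandwich hSt _
      rw [Matrix.transpose_mul, Matrix.transpose_mul, Matrix.transpose_transpose,
        Matrix.transpose_nonsing_inv, hBt, ← Matrix.mul_assoc]
  have hherm : (PHT.PO S A1 A2).IsHermitian := by
    rw [Matrix.IsHermitian, Matrix.conjTranspose_eq_transpose_of_trivial]
    exact hsymm
  have hposdef : (PHT.PO S A1 A2).PosDef := by
    refine Matrix.PosDef.of_dotProduct_mulVec_pos hherm fun x hx => ?_
    rw [star_trivial]
    have hsum : 0 < ∑ i, x i ^ 2 := by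
      have hex : ∃ i, x i ≠ 0 := by
        by_contra hcon
        push_neg at hcon
        exact hx (funext hcon)
      obtain ⟨i, hi⟩ := hex
      exact Finset.sum_pos' (fun k _ => sq_nonneg _)
        ⟨i, Finset.mem_univ i, sq_pos_of_ne_zero hi⟩
    calc (0:ℝ) < (∑ i, x i ^ 2) / lam1 := div_pos hsum hlam1pos
      _ ≤ _ := (main x).1
  refine ⟨hsymm, hposdef, ?_, ?_⟩
  · intro ζ hζ
    have := main ζ
    rw [hζ] at this
    constructor
    · simpa using this.1
    · have h2 := this.2
      rwa [mul_one] at h2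
  · intro hPO i
    set v : Fin p → ℝ := ⇑(hPO.eigenvectorBasis i) with hv
    have hunit : ∑ k, v k ^ 2 = 1 := by
      have hnorm1 : ‖hPO.eigenvectorBasis i‖ = 1 := hPO.eigenvectorBasis.orthonormal.1 i
      rw [EuclideanSpace.norm_eq] at hnorm1
      have : ∑ k, ‖hPO.eigenvectorBasis i k‖ ^ 2 = 1 := by
        have hnn : 0 ≤ ∑ k, ‖hPO.eigenvectorBasis i k‖ ^ 2 :=
          Finset.sum_nonneg fun k _ => sq_nonneg _
        nlinarith [Real.sq_sqrt hnn, hnorm1]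
      simpa [hv, Real.norm_eq_abs, sq_abs] using this
    have hmv : PHT.PO S A1 A2 *ᵥ v = hPO.eigenvalues i • v := hPO.mulVec_eigenvectorBasis i
    have hval : v ⬝ᵥ (PHT.PO S A1 A2) *ᵥ v = hPO.eigenvalues i := by
      rw [hmv, dotProduct_smul, smul_eq_mul]
      have : v ⬝ᵥ v = 1 := by
        rw [show v ⬝ᵥ v = ∑ k, v k ^ 2 from Finset.sum_congr rfl fun k _ => (sq (v k)).symm]
        exact hunit
      rw [this, mul_one]
    have := main v
    rw [hunit, hval] at this
    constructor
    · simpa using this.1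
    · have h2 := this.2
      rwa [mul_one] at h2
end
end

section
/- Let Σ ∈ ℝ^{p×p} be symmetric positive definite with all eigenvalues in [1/K̄, K̄] for some K̄ ≥ 1. Let A₁ be a set of pairs (i,j) with 1 ≤ i < j ≤ p, let A₂ be the set of indices in {1, …, p} that appear in no pair of A₁, and suppose K₀ ≥ 1 is an integer such that every index appears in at most K₀ pairs of A₁. Define P_O = Σ_{(i,j)∈A₁} P_{ij}ᵀ (P_{ij} Σ P_{ij}ᵀ)⁻¹ P_{ij} + Σ_{i∈A₂} P_iᵀ (P_i Σ P_iᵀ)⁻¹ P_i and Λ₁ = Σ^{1/2} P_O Σ^{1/2}. Then every eigenvalue of Λ₁ lies in [K̄⁻², K₀ K̄²]; consequently p K̄⁻⁴ ≤ tr(Λ₁²) ≤ p K₀² K̄⁴ and tr(Λ₁⁴)/tr²(Λ₁²) ≤ K₀⁴ K̄¹⁶ / p. -/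
open MeasureTheory ProbabilityTheory Filter Matrix
open scoped BigOperators Classical

noncomputable section

namespace PHT

/-- The positive semidefinite square root of a positive semidefinite matrix
(the former `Matrix.PosSemidef.sqrt`, with its old definition). -/
def psdSqrt {p : ℕ} {S : Matrix (Fin p) (Fin p) ℝ} (hA : S.PosSemidef) :
    Matrix (Fin p) (Fin p) ℝ :=
  (hA.1.eigenvectorUnitary : Matrix (Fin p) (Fin p) ℝ) *
    diagonal ((↑) ∘ (√·) ∘ hA.1.eigenvalues) *
    (star (hA.1.eigenvectorUnitary : Matrix (Fin p) (Fin p) ℝ))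

end PHT

section Aux10

open Matrix RealInnerProductSpace

variable {n : Type*} [Fintype n] [DecidableEq n]

/-- Rayleigh quotient bounds from eigenvalue bounds. -/
lemma aux10_rayleigh {A : Matrix n n ℝ} (hA : A.IsHermitian) {a b : ℝ}
    (ha : ∀ i, a ≤ hA.eigenvalues i) (hb : ∀ i, hA.eigenvalues i ≤ b) (v : n → ℝ) :
    a * (v ⬝ᵥ v) ≤ v ⬝ᵥ A *ᵥ v ∧ v ⬝ᵥ A *ᵥ v ≤ b * (v ⬝ᵥ v) := by
  set U : Matrix n n ℝ := (hA.eigenvectorUnitary : Matrix n n ℝ) with hU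
  have hUU : U * star U = 1 := (Matrix.mem_unitaryGroup_iff).mp hA.eigenvectorUnitary.2
  set u : n → ℝ := star U *ᵥ v with hu
  have hdiag : Matrix.diagonal (RCLike.ofReal ∘ hA.eigenvalues)
      = Matrix.diagonal hA.eigenvalues := by simp [Function.comp]
  have hvecU : v ᵥ* U = u := by
    rw [hu, Matrix.star_eq_conjTranspose, Matrix.conjTranspose_eq_transpose_of_trivial,
      Matrix.mulVec_transpose]
  have key : v ⬝ᵥ A *ᵥ v = ∑ i, hA.eigenvalues i * (u i * u i) := by
    conv_lhs => rw [hA.spectral_theorem, Unitary.conjStarAlgAut_apply]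
    rw [hdiag, ← Matrix.mulVec_mulVec, ← Matrix.mulVec_mulVec, Matrix.dotProduct_mulVec (A := U),
      hvecU, ← hU, ← hu]
    simp only [dotProduct, Matrix.mulVec_diagonal]
    exact Finset.sum_congr rfl fun i _ => by ring
  have key2 : v ⬝ᵥ v = ∑ i, u i * u i := by
    have h1 : u ⬝ᵥ u = v ⬝ᵥ (U * star U) *ᵥ v := by
      rw [← Matrix.mulVec_mulVec, Matrix.dotProduct_mulVec (A := U), hvecU]
    have h2 : v ⬝ᵥ (U * star U) *ᵥ v = v ⬝ᵥ v := by rw [hUU, Matrix.one_mulVec]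
    rw [← h1.trans h2]; rfl
  constructor
  · rw [key, key2, Finset.mul_sum]
    exact Finset.sum_le_sum fun i _ => mul_le_mul_of_nonneg_right (ha i) (mul_self_nonneg _)
  · rw [key, key2, Finset.mul_sum]
    exact Finset.sum_le_sum fun i _ => mul_le_mul_of_nonneg_right (hb i) (mul_self_nonneg _)

/-- Unit eigenvector whose Rayleigh quotient equals the eigenvalue. -/
lemma aux10_eigvec {A : Matrix n n ℝ} (hA : A.IsHermitian) (i : n) :
    ∃ v : n → ℝ, v ⬝ᵥ v = 1 ∧ A *ᵥ v = hA.eigenvalues i • v ∧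
      v ⬝ᵥ A *ᵥ v = hA.eigenvalues i := by
  set v : n → ℝ := (WithLp.equiv 2 (n → ℝ)) (hA.eigenvectorBasis i) with hv
  have h := hA.eigenvectorBasis.orthonormal.1 i
  have h2 : ⟪hA.eigenvectorBasis i, hA.eigenvectorBasis i⟫ = (1:ℝ) := by
    rw [real_inner_self_eq_norm_sq, h]; norm_num
  rw [PiLp.inner_apply] at h2
  simp only [RCLike.inner_apply, conj_trivial] at h2
  have hdot : v ⬝ᵥ v = 1 := h2
  refine ⟨v, hdot, hA.mulVec_eigenvectorBasis i, ?_⟩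
  rw [show A *ᵥ v = hA.eigenvalues i • v from hA.mulVec_eigenvectorBasis i]
  rw [dotProduct_smul, smul_eq_mul, hdot, mul_one]

/-- Trace of a power of a Hermitian matrix. -/
lemma aux10_trace_pow {A : Matrix n n ℝ} (hA : A.IsHermitian) (k : ℕ) :
    (A ^ k).trace = ∑ i, hA.eigenvalues i ^ k := by
  set U : Matrix n n ℝ := (hA.eigenvectorUnitary : Matrix n n ℝ) with hU
  have hUU : U * star U = 1 := (Matrix.mem_unitaryGroup_iff).mp hA.eigenvectorUnitary.2
  have hUU' : star U * U = 1 := (Matrix.mem_unitaryGroup_iff').mp hA.eigenvectorUnitary.2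
  have hAeq := hA.spectral_theorem
  rw [Unitary.conjStarAlgAut_apply] at hAeq
  rw [show Matrix.diagonal (RCLike.ofReal ∘ hA.eigenvalues) = Matrix.diagonal hA.eigenvalues by
    simp [Function.comp]] at hAeq
  set D : Matrix n n ℝ := Matrix.diagonal hA.eigenvalues with hD
  have key : ∀ m : ℕ, A ^ m = U * D ^ m * star U := by
    intro m
    induction m with
    | zero => simp [pow_zero, hUU]
    | succ m ih =>
      rw [pow_succ, ih]
      conv_lhs => rw [hAeq]
      rw [pow_succ]
      simp only [Matrix.mul_assoc]
      rw [← Matrix.mul_assoc (star U) U (D * star U), hUU', Matrix.one_mul]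
  rw [key k, Matrix.trace_mul_cycle, hUU', Matrix.one_mul, hD, Matrix.diagonal_pow,
    Matrix.trace_diagonal]
  rfl

lemma aux10_conj {k p : Type*} [Fintype k] [Fintype p]
    (P : Matrix k p ℝ) (N : Matrix k k ℝ) (w : p → ℝ) :
    w ⬝ᵥ (Pᵀ * N * P) *ᵥ w = (P *ᵥ w) ⬝ᵥ N *ᵥ (P *ᵥ w) := by
  rw [← Matrix.mulVec_mulVec, ← Matrix.mulVec_mulVec, Matrix.dotProduct_mulVec (A := Pᵀ),
    Matrix.vecMul_transpose]

/-- Rayleigh bounds for the inverse of a positive definite matrix. -/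
lemma aux10_inv_rayleigh {M : Matrix n n ℝ} (hM : M.PosDef) {a b : ℝ} (ha : 0 < a)
    (hQ : ∀ u : n → ℝ, a * (u ⬝ᵥ u) ≤ u ⬝ᵥ M *ᵥ u ∧ u ⬝ᵥ M *ᵥ u ≤ b * (u ⬝ᵥ u)) :
    ∀ u : n → ℝ, b⁻¹ * (u ⬝ᵥ u) ≤ u ⬝ᵥ M⁻¹ *ᵥ u ∧ u ⬝ᵥ M⁻¹ *ᵥ u ≤ a⁻¹ * (u ⬝ᵥ u) := by
  have hMinv : (M⁻¹).PosDef := hM.inv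
  have hHerm : (M⁻¹).IsHermitian := hMinv.1
  have hdet : IsUnit M.det := isUnit_iff_ne_zero.mpr (ne_of_gt hM.det_pos)
  have heig : ∀ i, b⁻¹ ≤ hHerm.eigenvalues i ∧ hHerm.eigenvalues i ≤ a⁻¹ := by
    intro i
    obtain ⟨v, hv1, hv2, hv3⟩ := aux10_eigvec hHerm i
    set μ := hHerm.eigenvalues i with hμ
    have hμpos : 0 < μ := hMinv.eigenvalues_pos i
    have hMv : M *ᵥ v = μ⁻¹ • v := by
      have h1 : M *ᵥ (M⁻¹ *ᵥ v) = v := by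
        rw [Matrix.mulVec_mulVec, Matrix.mul_nonsing_inv M hdet, Matrix.one_mulVec]
      rw [hv2, Matrix.mulVec_smul] at h1
      have := congrArg (fun x => μ⁻¹ • x) h1
      simpa [smul_smul, inv_mul_cancel₀ (ne_of_gt hμpos)] using this
    have hray : v ⬝ᵥ M *ᵥ v = μ⁻¹ := by
      rw [hMv, dotProduct_smul, smul_eq_mul, hv1, mul_one]
    obtain ⟨hl, hr⟩ := hQ v
    rw [hv1, mul_one] at hl
    rw [hv1, mul_one] at hr
    rw [hray] at hl hr
    constructor
    · have := inv_anti₀ (inv_pos.mpr hμpos) hr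
      rwa [inv_inv] at this
    · have := inv_anti₀ ha hl
      rwa [inv_inv] at this
  intro u
  exact aux10_rayleigh hHerm (fun i => (heig i).1) (fun i => (heig i).2) u

/-- Quadratic-form bounds for a compressed-inverse block. -/
lemma aux10_block {k p : Type*} [Fintype k] [Fintype p] [DecidableEq k]
    {S : Matrix p p ℝ} (hS : S.IsHermitian) {a b : ℝ} (ha : 0 < a)
    (hray : ∀ z : p → ℝ, a * (z ⬝ᵥ z) ≤ z ⬝ᵥ S *ᵥ z ∧ z ⬝ᵥ S *ᵥ z ≤ b * (z ⬝ᵥ z))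
    (P : Matrix k p ℝ) (hP : P * Pᵀ = 1) (w : p → ℝ) :
    b⁻¹ * ((P *ᵥ w) ⬝ᵥ (P *ᵥ w)) ≤ w ⬝ᵥ (Pᵀ * (P * S * Pᵀ)⁻¹ * P) *ᵥ w ∧
      w ⬝ᵥ (Pᵀ * (P * S * Pᵀ)⁻¹ * P) *ᵥ w ≤ a⁻¹ * ((P *ᵥ w) ⬝ᵥ (P *ᵥ w)) := by
  set M : Matrix k k ℝ := P * S * Pᵀ with hM
  have hMform : ∀ u : k → ℝ, u ⬝ᵥ M *ᵥ u = (Pᵀ *ᵥ u) ⬝ᵥ S *ᵥ (Pᵀ *ᵥ u) := by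
    intro u
    have := aux10_conj Pᵀ S u
    rwa [Matrix.transpose_transpose] at this
  have hnorm : ∀ u : k → ℝ, (Pᵀ *ᵥ u) ⬝ᵥ (Pᵀ *ᵥ u) = u ⬝ᵥ u := by
    intro u
    have h := aux10_conj Pᵀ (1 : Matrix p p ℝ) u
    rw [Matrix.transpose_transpose, Matrix.mul_one, hP] at h
    simpa [Matrix.one_mulVec] using h.symm
  have hMray : ∀ u : k → ℝ, a * (u ⬝ᵥ u) ≤ u ⬝ᵥ M *ᵥ u ∧ u ⬝ᵥ M *ᵥ u ≤ b * (u ⬝ᵥ u) := by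
    intro u
    rw [hMform u, ← hnorm u]
    exact hray _
  have hMherm : M.IsHermitian := by
    have h := Matrix.isHermitian_conjTranspose_mul_mul (A := S) Pᵀ hS
    rwa [Matrix.conjTranspose_eq_transpose_of_trivial, Matrix.transpose_transpose] at h
  have hMpd : M.PosDef := by
    refine Matrix.PosDef.of_dotProduct_mulVec_pos hMherm fun x hx => ?_
    have hxx : 0 < x ⬝ᵥ x := by
      have h := Matrix.dotProduct_self_star_pos_iff (v := x)
      simpa using h.mpr hx
    have h := (hMray x).1
    have : 0 < x ⬝ᵥ M *ᵥ x := lt_of_lt_of_le (by positivity) h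
    simpa using this
  have := aux10_inv_rayleigh hMpd ha hMray (P *ᵥ w)
  rw [aux10_conj P (M⁻¹) w]
  exact this

lemma aux10_dot_sum {p ι : Type*} [Fintype p] (s : Finset ι)
    (f : ι → Matrix p p ℝ) (w : p → ℝ) :
    w ⬝ᵥ (∑ i ∈ s, f i) *ᵥ w = ∑ i ∈ s, w ⬝ᵥ (f i) *ᵥ w := by
  classical
  induction s using Finset.induction with
  | empty => simp [Matrix.zero_mulVec]
  | insert _ _ h ih =>
    rw [Finset.sum_insert h, Finset.sum_insert h, Matrix.add_mulVec,
      dotProduct_add, ih]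

lemma aux10_P2_mul {p : ℕ} {i j : Fin p} (hij : i ≠ j) :
    PHT.P2 i j * (PHT.P2 i j)ᵀ = 1 := by
  ext r c
  fin_cases r <;> fin_cases c <;>
    simp [PHT.P2, Matrix.mul_apply, Matrix.one_apply, Finset.sum_ite_eq', hij, hij.symm]

lemma aux10_P2_dot {p : ℕ} (i j : Fin p) (w : Fin p → ℝ) :
    (PHT.P2 i j *ᵥ w) ⬝ᵥ (PHT.P2 i j *ᵥ w) = w i ^ 2 + w j ^ 2 := by
  have h : PHT.P2 i j *ᵥ w = ![w i, w j] := by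
    ext r
    fin_cases r <;> simp [PHT.P2, Matrix.mulVec, dotProduct, ite_mul, Finset.sum_ite_eq']
  rw [h]
  simp [dotProduct, Fin.sum_univ_two]; ring

lemma aux10_P1_mul {p : ℕ} (i : Fin p) : PHT.P1 i * (PHT.P1 i)ᵀ = 1 := by
  ext r c
  fin_cases r; fin_cases c
  simp [PHT.P1, Matrix.mul_apply, Matrix.one_apply, Finset.sum_ite_eq']

lemma aux10_P1_dot {p : ℕ} (i : Fin p) (w : Fin p → ℝ) :
    (PHT.P1 i *ᵥ w) ⬝ᵥ (PHT.P1 i *ᵥ w) = w i ^ 2 := by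
  have h : PHT.P1 i *ᵥ w = ![w i] := by
    ext r
    fin_cases r; simp [PHT.P1, Matrix.mulVec, dotProduct, ite_mul, Finset.sum_ite_eq']
  rw [h]
  simp [dotProduct, Fin.sum_univ_one]; ring

lemma aux10_sqrt_herm {p : ℕ} {S : Matrix (Fin p) (Fin p) ℝ} (hA : S.PosSemidef) :
    (PHT.psdSqrt hA).IsHermitian := by
  unfold PHT.psdSqrt
  rw [Matrix.star_eq_conjTranspose]
  exact Matrix.isHermitian_mul_mul_conjTranspose _ (Matrix.isHermitian_diagonal _)

lemma aux10_sqrt_mul {p : ℕ} {S : Matrix (Fin p) (Fin p) ℝ} (hA : S.PosSemidef) :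
    PHT.psdSqrt hA * PHT.psdSqrt hA = S := by
  have hUU' : star (hA.1.eigenvectorUnitary : Matrix (Fin p) (Fin p) ℝ) *
      (hA.1.eigenvectorUnitary : Matrix (Fin p) (Fin p) ℝ) = 1 :=
    (Matrix.mem_unitaryGroup_iff').mp hA.1.eigenvectorUnitary.2
  conv_rhs => rw [hA.1.spectral_theorem, Unitary.conjStarAlgAut_apply]
  unfold PHT.psdSqrt
  simp only [Matrix.mul_assoc]
  rw [← Matrix.mul_assoc (star _) _ (diagonal _ * _), hUU', Matrix.one_mul,
    ← Matrix.mul_assoc (diagonal _) (diagonal _), Matrix.diagonal_mul_diagonal]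
  congr 3
  funext i
  simp [Real.mul_self_sqrt (hA.eigenvalues_nonneg i)]

end Aux10

/-- For `Σ` symmetric positive definite with all eigenvalues in `[1/K̄, K̄]`,
pairs `A₁` each index of which appears in at most `K₀` pairs, `A₂` the unpaired indices,
`P_O` as above and `Λ₁ = Σ^{1/2} P_O Σ^{1/2}`: every eigenvalue of `Λ₁` (equivalently,
every Rayleigh quotient at a unit vector) lies in `[K̄⁻², K₀K̄²]`; consequently
`p K̄⁻⁴ ≤ tr(Λ₁²) ≤ p K₀² K̄⁴` and `tr(Λ₁⁴)/tr²(Λ₁²) ≤ K₀⁴ K̄¹⁶ / p`. -/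
theorem statement10 {p : ℕ} (hp : 0 < p) (Kb : ℝ) (hKb : 1 ≤ Kb)
    (S : Matrix (Fin p) (Fin p) ℝ) (hPD : S.PosDef)
    (heig : ∀ i, 1 / Kb ≤ hPD.1.eigenvalues i ∧ hPD.1.eigenvalues i ≤ Kb)
    (A1 : Finset (Fin p × Fin p)) (hA1 : ∀ ij ∈ A1, ij.1 < ij.2)
    (K0 : ℕ) (hK0 : 1 ≤ K0)
    (hK0card : ∀ i : Fin p, (A1.filter fun ij => ij.1 = i ∨ ij.2 = i).card ≤ K0)
    (A2 : Finset (Fin p))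
    (hA2 : A2 = Finset.univ.filter fun i => ∀ ij ∈ A1, ij.1 ≠ i ∧ ij.2 ≠ i)
    (Λ : Matrix (Fin p) (Fin p) ℝ)
    (hΛ : Λ = PHT.psdSqrt hPD.posSemidef * PHT.PO S A1 A2 * PHT.psdSqrt hPD.posSemidef) :
    (∀ v : Fin p → ℝ, (∑ i, v i ^ 2) = 1 →
        Kb⁻¹ ^ 2 ≤ v ⬝ᵥ Λ.mulVec v ∧ v ⬝ᵥ Λ.mulVec v ≤ (K0 : ℝ) * Kb ^ 2) ∧
      (∀ hΛh : Λ.IsHermitian, ∀ i,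
        Kb⁻¹ ^ 2 ≤ hΛh.eigenvalues i ∧ hΛh.eigenvalues i ≤ (K0 : ℝ) * Kb ^ 2) ∧
      (p : ℝ) * Kb⁻¹ ^ 4 ≤ Matrix.trace (Λ ^ 2) ∧
      Matrix.trace (Λ ^ 2) ≤ (p : ℝ) * (K0 : ℝ) ^ 2 * Kb ^ 4 ∧
      Matrix.trace (Λ ^ 4) / Matrix.trace (Λ ^ 2) ^ 2 ≤ (K0 : ℝ) ^ 4 * Kb ^ 16 / (p : ℝ) := by
  classical
  have hKb0 : (0:ℝ) < Kb := lt_of_lt_of_le one_pos hKb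
  have hKbinv : (0:ℝ) < Kb⁻¹ := inv_pos.mpr hKb0
  have hK0R : (1:ℝ) ≤ (K0:ℝ) := by exact_mod_cast hK0
  have hSherm : S.IsHermitian := hPD.1
  -- Rayleigh bounds for S
  have hSray : ∀ z : Fin p → ℝ, Kb⁻¹ * (z ⬝ᵥ z) ≤ z ⬝ᵥ S *ᵥ z ∧ z ⬝ᵥ S *ᵥ z ≤ Kb * (z ⬝ᵥ z) := by
    intro z
    refine aux10_rayleigh hSherm (fun i => ?_) (fun i => (heig i).2) z
    rw [inv_eq_one_div]; exact (heig i).1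
  -- the two families of blocks in PO
  set F1 : Fin p × Fin p → Matrix (Fin p) (Fin p) ℝ := fun ij =>
    (PHT.P2 ij.1 ij.2)ᵀ * (PHT.P2 ij.1 ij.2 * S * (PHT.P2 ij.1 ij.2)ᵀ)⁻¹ * PHT.P2 ij.1 ij.2
    with hF1
  set F2 : Fin p → Matrix (Fin p) (Fin p) ℝ := fun i =>
    (PHT.P1 i)ᵀ * (PHT.P1 i * S * (PHT.P1 i)ᵀ)⁻¹ * PHT.P1 i with hF2
  have hPOsum : ∀ w : Fin p → ℝ, w ⬝ᵥ (PHT.PO S A1 A2) *ᵥ w =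
      (∑ ij ∈ A1, w ⬝ᵥ (F1 ij) *ᵥ w) + ∑ i ∈ A2, w ⬝ᵥ (F2 i) *ᵥ w := by
    intro w
    rw [PHT.PO, Matrix.add_mulVec, dotProduct_add, aux10_dot_sum, aux10_dot_sum]
  -- per-block bounds
  have hterm1 : ∀ ij ∈ A1, ∀ w : Fin p → ℝ,
      Kb⁻¹ * (w ij.1 ^ 2 + w ij.2 ^ 2) ≤ w ⬝ᵥ (F1 ij) *ᵥ w ∧
        w ⬝ᵥ (F1 ij) *ᵥ w ≤ Kb * (w ij.1 ^ 2 + w ij.2 ^ 2) := by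
    intro ij hij w
    have hne : ij.1 ≠ ij.2 := ne_of_lt (hA1 ij hij)
    have h := aux10_block hSherm hKbinv hSray (PHT.P2 ij.1 ij.2) (aux10_P2_mul hne) w
    rw [aux10_P2_dot, inv_inv] at h
    exact h
  have hterm2 : ∀ (i : Fin p), ∀ w : Fin p → ℝ,
      Kb⁻¹ * (w i ^ 2) ≤ w ⬝ᵥ (F2 i) *ᵥ w ∧ w ⬝ᵥ (F2 i) *ᵥ w ≤ Kb * (w i ^ 2) := by
    intro i w
    have h := aux10_block hSherm hKbinv hSray (PHT.P1 i) (aux10_P1_mul i) w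
    rw [aux10_P1_dot, inv_inv] at h
    exact h
  -- counting
  set c : Fin p → ℕ := fun i => (A1.filter fun ij => ij.1 = i ∨ ij.2 = i).card with hc
  have hsum1 : ∀ w : Fin p → ℝ,
      (∑ ij ∈ A1, (w ij.1 ^ 2 + w ij.2 ^ 2)) = ∑ i, (c i : ℝ) * w i ^ 2 := by
    intro w
    have step1 : ∀ ij ∈ A1,
        (w ij.1 ^ 2 + w ij.2 ^ 2) = ∑ i, (if ij.1 = i ∨ ij.2 = i then w i ^ 2 else 0) := by
      intro ij hij
      have hne : ij.1 ≠ ij.2 := ne_of_lt (hA1 ij hij)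
      have hsplit : ∀ i, (if ij.1 = i ∨ ij.2 = i then w i ^ 2 else 0) =
          (if ij.1 = i then w i ^ 2 else 0) + (if ij.2 = i then w i ^ 2 else 0) := by
        intro i
        by_cases h1 : ij.1 = i <;> by_cases h2 : ij.2 = i <;>
          simp [h1, h2]
        · exact absurd (h1.trans h2.symm) hne
      rw [Finset.sum_congr rfl (fun i _ => hsplit i), Finset.sum_add_distrib,
        Finset.sum_ite_eq, Finset.sum_ite_eq]
      simp
    rw [Finset.sum_congr rfl step1, Finset.sum_comm]
    refine Finset.sum_congr rfl fun i _ => ?_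
    rw [← Finset.sum_filter, Finset.sum_const, nsmul_eq_mul]
  have hsum2 : ∀ w : Fin p → ℝ,
      (∑ i ∈ A2, w i ^ 2) = ∑ i, (if i ∈ A2 then (1:ℝ) else 0) * w i ^ 2 := by
    intro w
    rw [show A2 = Finset.univ.filter (fun i => i ∈ A2) by
      ext i; simp]
    rw [Finset.sum_filter]
    · refine Finset.sum_congr rfl fun i _ => ?_
      by_cases h : i ∈ A2 <;> simp [h]
  set e : Fin p → ℝ := fun i => (c i : ℝ) + (if i ∈ A2 then (1:ℝ) else 0) with he
  have hlb : ∀ i, (1:ℝ) ≤ e i := by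
    intro i
    by_cases hi : i ∈ A2
    · have : (0:ℝ) ≤ (c i : ℝ) := Nat.cast_nonneg _
      simp only [he, hi, if_true]; linarith
    · rw [hA2] at hi
      simp only [Finset.mem_filter, Finset.mem_univ, true_and] at hi
      push_neg at hi
      obtain ⟨ij, hijA1, hij⟩ := hi
      have hmem : ij ∈ A1.filter fun ij => ij.1 = i ∨ ij.2 = i := by
        rw [Finset.mem_filter]
        refine ⟨hijA1, ?_⟩
        by_cases h1 : ij.1 = i
        · exact Or.inl h1
        · exact Or.inr (by tauto)
      have hpos : 0 < c i := Finset.card_pos.mpr ⟨ij, hmem⟩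
      have : (1:ℝ) ≤ (c i : ℝ) := by exact_mod_cast hpos
      rw [hA2] at *
      simp only [he]
      split <;> linarith
  have hub : ∀ i, e i ≤ (K0 : ℝ) := by
    intro i
    by_cases hi : i ∈ A2
    · have hzero : c i = 0 := by
        rw [Finset.card_eq_zero]
        rw [Finset.filter_eq_empty_iff]
        intro ij hij
        rw [hA2] at hi
        simp only [Finset.mem_filter, Finset.mem_univ, true_and] at hi
        have := hi ij hij
        tauto
      simp only [he, hi, if_true, hzero, Nat.cast_zero, zero_add]
      exact hK0R
    · have : (c i : ℝ) ≤ (K0 : ℝ) := by exact_mod_cast hK0card i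
      simp only [he, hi, if_false, add_zero]
      exact this
  -- Rayleigh bounds for PO
  have hPOray : ∀ w : Fin p → ℝ,
      Kb⁻¹ * (w ⬝ᵥ w) ≤ w ⬝ᵥ (PHT.PO S A1 A2) *ᵥ w ∧
        w ⬝ᵥ (PHT.PO S A1 A2) *ᵥ w ≤ ((K0 : ℝ) * Kb) * (w ⬝ᵥ w) := by
    intro w
    have hww : w ⬝ᵥ w = ∑ i, w i ^ 2 := by
      simp [dotProduct, pow_two]
    have hEsum : (∑ ij ∈ A1, (w ij.1 ^ 2 + w ij.2 ^ 2)) + ∑ i ∈ A2, w i ^ 2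
        = ∑ i, e i * w i ^ 2 := by
      rw [hsum1 w, hsum2 w, ← Finset.sum_add_distrib]
      refine Finset.sum_congr rfl fun i _ => ?_
      simp only [he]; ring
    constructor
    · rw [hPOsum w]
      calc Kb⁻¹ * (w ⬝ᵥ w) = Kb⁻¹ * ∑ i, 1 * w i ^ 2 := by rw [hww]; simp
        _ ≤ Kb⁻¹ * ∑ i, e i * w i ^ 2 := by
            refine mul_le_mul_of_nonneg_left (Finset.sum_le_sum fun i _ => ?_) (le_of_lt hKbinv)
            exact mul_le_mul_of_nonneg_right (hlb i) (sq_nonneg _)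
        _ = Kb⁻¹ * ((∑ ij ∈ A1, (w ij.1 ^ 2 + w ij.2 ^ 2)) + ∑ i ∈ A2, w i ^ 2) := by
            rw [hEsum]
        _ = (∑ ij ∈ A1, Kb⁻¹ * (w ij.1 ^ 2 + w ij.2 ^ 2)) + ∑ i ∈ A2, Kb⁻¹ * w i ^ 2 := by
            rw [mul_add, Finset.mul_sum, Finset.mul_sum]
        _ ≤ (∑ ij ∈ A1, w ⬝ᵥ (F1 ij) *ᵥ w) + ∑ i ∈ A2, w ⬝ᵥ (F2 i) *ᵥ w := by
            refine add_le_add (Finset.sum_le_sum fun ij hij => (hterm1 ij hij w).1)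
              (Finset.sum_le_sum fun i _ => (hterm2 i w).1)
    · rw [hPOsum w]
      calc (∑ ij ∈ A1, w ⬝ᵥ (F1 ij) *ᵥ w) + ∑ i ∈ A2, w ⬝ᵥ (F2 i) *ᵥ w
          ≤ (∑ ij ∈ A1, Kb * (w ij.1 ^ 2 + w ij.2 ^ 2)) + ∑ i ∈ A2, Kb * w i ^ 2 := by
            refine add_le_add (Finset.sum_le_sum fun ij hij => (hterm1 ij hij w).2)
              (Finset.sum_le_sum fun i _ => (hterm2 i w).2)
        _ = Kb * ∑ i, e i * w i ^ 2 := by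
            rw [← hEsum, mul_add, Finset.mul_sum, Finset.mul_sum]
        _ ≤ Kb * ∑ i, (K0 : ℝ) * w i ^ 2 := by
            refine mul_le_mul_of_nonneg_left (Finset.sum_le_sum fun i _ => ?_) (le_of_lt hKb0)
            exact mul_le_mul_of_nonneg_right (hub i) (sq_nonneg _)
        _ = ((K0 : ℝ) * Kb) * (w ⬝ᵥ w) := by
            rw [hww, Finset.mul_sum, Finset.mul_sum]
            exact Finset.sum_congr rfl fun i _ => by ring
  -- the square root
  set Q : Matrix (Fin p) (Fin p) ℝ := PHT.psdSqrt hPD.posSemidef with hQ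
  have hQherm : Q.IsHermitian := aux10_sqrt_herm hPD.posSemidef
  have hQt : Qᵀ = Q := by
    rw [← Matrix.conjTranspose_eq_transpose_of_trivial]; exact hQherm
  have hQQ : Q * Q = S := aux10_sqrt_mul hPD.posSemidef
  have hΛform : ∀ v : Fin p → ℝ, v ⬝ᵥ Λ *ᵥ v = (Q *ᵥ v) ⬝ᵥ (PHT.PO S A1 A2) *ᵥ (Q *ᵥ v) := by
    intro v
    rw [hΛ, show PHT.psdSqrt hPD.posSemidef * PHT.PO S A1 A2 * PHT.psdSqrt hPD.posSemidef
        = Qᵀ * PHT.PO S A1 A2 * Q by rw [hQt]]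
    exact aux10_conj Q _ v
  have hnormQ : ∀ v : Fin p → ℝ, (Q *ᵥ v) ⬝ᵥ (Q *ᵥ v) = v ⬝ᵥ S *ᵥ v := by
    intro v
    have h := aux10_conj Q (1 : Matrix (Fin p) (Fin p) ℝ) v
    rw [hQt, Matrix.mul_one, hQQ] at h
    simpa [Matrix.one_mulVec] using h.symm
  -- Rayleigh bounds for Λ
  have hΛray : ∀ v : Fin p → ℝ, v ⬝ᵥ v = 1 →
      Kb⁻¹ ^ 2 ≤ v ⬝ᵥ Λ *ᵥ v ∧ v ⬝ᵥ Λ *ᵥ v ≤ (K0 : ℝ) * Kb ^ 2 := by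
    intro v hv
    have hS1 : Kb⁻¹ ≤ v ⬝ᵥ S *ᵥ v := by
      have := (hSray v).1; rwa [hv, mul_one] at this
    have hS2 : v ⬝ᵥ S *ᵥ v ≤ Kb := by
      have := (hSray v).2; rwa [hv, mul_one] at this
    rw [hΛform v]
    constructor
    · calc Kb⁻¹ ^ 2 = Kb⁻¹ * Kb⁻¹ := sq Kb⁻¹
        _ ≤ Kb⁻¹ * ((Q *ᵥ v) ⬝ᵥ (Q *ᵥ v)) := by
            rw [hnormQ v]
            exact mul_le_mul_of_nonneg_left hS1 (le_of_lt hKbinv)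
        _ ≤ (Q *ᵥ v) ⬝ᵥ (PHT.PO S A1 A2) *ᵥ (Q *ᵥ v) := (hPOray (Q *ᵥ v)).1
    · calc (Q *ᵥ v) ⬝ᵥ (PHT.PO S A1 A2) *ᵥ (Q *ᵥ v)
          ≤ ((K0 : ℝ) * Kb) * ((Q *ᵥ v) ⬝ᵥ (Q *ᵥ v)) := (hPOray (Q *ᵥ v)).2
        _ ≤ ((K0 : ℝ) * Kb) * Kb := by
            rw [hnormQ v]
            refine mul_le_mul_of_nonneg_left hS2 ?_
            positivity
        _ = (K0 : ℝ) * Kb ^ 2 := by ring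
  -- first bullet
  have bullet1 : ∀ v : Fin p → ℝ, (∑ i, v i ^ 2) = 1 →
      Kb⁻¹ ^ 2 ≤ v ⬝ᵥ Λ.mulVec v ∧ v ⬝ᵥ Λ.mulVec v ≤ (K0 : ℝ) * Kb ^ 2 := by
    intro v hv
    have hvv : v ⬝ᵥ v = 1 := by
      rw [show v ⬝ᵥ v = ∑ i, v i ^ 2 by simp [dotProduct, pow_two]]
      exact hv
    exact hΛray v hvv
  -- second bullet
  have bullet2 : ∀ hΛh : Λ.IsHermitian, ∀ i,
      Kb⁻¹ ^ 2 ≤ hΛh.eigenvalues i ∧ hΛh.eigenvalues i ≤ (K0 : ℝ) * Kb ^ 2 := by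
    intro hΛh i
    obtain ⟨v, hv1, _, hv3⟩ := aux10_eigvec hΛh i
    rw [← hv3]
    exact hΛray v hv1
  -- Hermitian structure of Λ
  have hPOherm : (PHT.PO S A1 A2).IsHermitian := by
    have h1 : ∀ ij : Fin p × Fin p, (F1 ij).IsHermitian := by
      intro ij
      have hMherm : (PHT.P2 ij.1 ij.2 * S * (PHT.P2 ij.1 ij.2)ᵀ).IsHermitian := by
        have h := Matrix.isHermitian_conjTranspose_mul_mul (A := S) (PHT.P2 ij.1 ij.2)ᵀ hSherm
        rwa [Matrix.conjTranspose_eq_transpose_of_trivial, Matrix.transpose_transpose] at h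
      have h := Matrix.isHermitian_conjTranspose_mul_mul (PHT.P2 ij.1 ij.2) hMherm.inv
      rwa [Matrix.conjTranspose_eq_transpose_of_trivial] at h
    have h2 : ∀ i : Fin p, (F2 i).IsHermitian := by
      intro i
      have hMherm : (PHT.P1 i * S * (PHT.P1 i)ᵀ).IsHermitian := by
        have h := Matrix.isHermitian_conjTranspose_mul_mul (A := S) (PHT.P1 i)ᵀ hSherm
        rwa [Matrix.conjTranspose_eq_transpose_of_trivial, Matrix.transpose_transpose] at h
      have h := Matrix.isHermitian_conjTranspose_mul_mul (PHT.P1 i) hMherm.inv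
      rwa [Matrix.conjTranspose_eq_transpose_of_trivial] at h
    show (PHT.PO S A1 A2)ᴴ = PHT.PO S A1 A2
    rw [PHT.PO, Matrix.conjTranspose_add, Matrix.conjTranspose_sum, Matrix.conjTranspose_sum]
    congr 1
    · exact Finset.sum_congr rfl fun ij _ => h1 ij
    · exact Finset.sum_congr rfl fun i _ => h2 i
  have hΛherm : Λ.IsHermitian := by
    rw [hΛ, show PHT.psdSqrt hPD.posSemidef * PHT.PO S A1 A2 * PHT.psdSqrt hPD.posSemidef
        = Qᴴ * PHT.PO S A1 A2 * Q by
      rw [Matrix.conjTranspose_eq_transpose_of_trivial, hQt]]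
    exact Matrix.isHermitian_conjTranspose_mul_mul Q hPOherm
  set μ : Fin p → ℝ := hΛherm.eigenvalues with hμ
  have heigΛ : ∀ i, Kb⁻¹ ^ 2 ≤ μ i ∧ μ i ≤ (K0 : ℝ) * Kb ^ 2 := bullet2 hΛherm
  have htr2 : Matrix.trace (Λ ^ 2) = ∑ i, μ i ^ 2 := aux10_trace_pow hΛherm 2
  have htr4 : Matrix.trace (Λ ^ 4) = ∑ i, μ i ^ 4 := aux10_trace_pow hΛherm 4
  have hμlb : ∀ i, (0:ℝ) < μ i := fun i => lt_of_lt_of_le (by positivity) (heigΛ i).1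
  -- trace bounds
  have htr2lb : (p : ℝ) * Kb⁻¹ ^ 4 ≤ Matrix.trace (Λ ^ 2) := by
    rw [htr2]
    calc (p : ℝ) * Kb⁻¹ ^ 4 = ∑ _i : Fin p, Kb⁻¹ ^ 4 := by
          rw [Finset.sum_const, Finset.card_univ, Fintype.card_fin, nsmul_eq_mul]
      _ ≤ ∑ i, μ i ^ 2 := by
          refine Finset.sum_le_sum fun i _ => ?_
          have h := pow_le_pow_left₀ (by positivity : (0:ℝ) ≤ Kb⁻¹ ^ 2) (heigΛ i).1 2
          calc Kb⁻¹ ^ 4 = (Kb⁻¹ ^ 2) ^ 2 := by ring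
            _ ≤ μ i ^ 2 := h
  have htr2ub : Matrix.trace (Λ ^ 2) ≤ (p : ℝ) * (K0 : ℝ) ^ 2 * Kb ^ 4 := by
    rw [htr2]
    calc (∑ i, μ i ^ 2) ≤ ∑ _i : Fin p, ((K0 : ℝ) * Kb ^ 2) ^ 2 := by
          refine Finset.sum_le_sum fun i _ => ?_
          exact pow_le_pow_left₀ (le_of_lt (hμlb i)) (heigΛ i).2 2
      _ = (p : ℝ) * (K0 : ℝ) ^ 2 * Kb ^ 4 := by
          rw [Finset.sum_const, Finset.card_univ, Fintype.card_fin, nsmul_eq_mul]; ring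
  have htr4ub : Matrix.trace (Λ ^ 4) ≤ (p : ℝ) * (K0 : ℝ) ^ 4 * Kb ^ 8 := by
    rw [htr4]
    calc (∑ i, μ i ^ 4) ≤ ∑ _i : Fin p, ((K0 : ℝ) * Kb ^ 2) ^ 4 := by
          refine Finset.sum_le_sum fun i _ => ?_
          exact pow_le_pow_left₀ (le_of_lt (hμlb i)) (heigΛ i).2 4
      _ = (p : ℝ) * (K0 : ℝ) ^ 4 * Kb ^ 8 := by
          rw [Finset.sum_const, Finset.card_univ, Fintype.card_fin, nsmul_eq_mul]; ring
  refine ⟨bullet1, bullet2, htr2lb, htr2ub, ?_⟩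
  -- the ratio bound
  have hp' : (0:ℝ) < (p : ℝ) := by exact_mod_cast hp
  have hdpos : (0:ℝ) < ((p : ℝ) * Kb⁻¹ ^ 4) ^ 2 := by positivity
  have hT2sq : ((p : ℝ) * Kb⁻¹ ^ 4) ^ 2 ≤ Matrix.trace (Λ ^ 2) ^ 2 :=
    pow_le_pow_left₀ (by positivity) htr2lb 2
  have hT4nn : (0:ℝ) ≤ (p : ℝ) * (K0 : ℝ) ^ 4 * Kb ^ 8 := by positivity
  calc Matrix.trace (Λ ^ 4) / Matrix.trace (Λ ^ 2) ^ 2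
      ≤ ((p : ℝ) * (K0 : ℝ) ^ 4 * Kb ^ 8) / (((p : ℝ) * Kb⁻¹ ^ 4) ^ 2) :=
        div_le_div₀ hT4nn htr4ub hdpos hT2sq
    _ = (K0 : ℝ) ^ 4 * Kb ^ 16 / (p : ℝ) := by
        field_simp
end
end

section
/- Let X₁, …, X_{n₁} and Y₁, …, Y_{n₂} (n₁, n₂ ≥ 2) be two mutually independent i.i.d. samples of p-dimensional random vectors with E(X₁) = E(Y₁) = 0 and the same covariance matrix Σ (all coordinates square-integrable), and let M ∈ ℝ^{p×p} be symmetric. Define T = (1/(n₁(n₁−1))) Σ_{s=1}^{n₁} Σ_{t≠s} X_sᵀ M X_t + (1/(n₂(n₂−1))) Σ_{s=1}^{n₂} Σ_{t≠s} Y_sᵀ M Y_t − (2/(n₁n₂)) Σ_{s=1}^{n₁} Σ_{t=1}^{n₂} X_sᵀ M Y_t. Then E(T) = 0 and Var(T) = φ(n₁,n₂) · tr((MΣ)²), where φ(n₁,n₂) = 2/(n₁(n₁−1)) + 2/(n₂(n₂−1)) + 4/(n₁n₂). -/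
open MeasureTheory ProbabilityTheory Filter Matrix
open scoped BigOperators Classical

noncomputable section

section Aux12
open MeasureTheory ProbabilityTheory

/-- flatten a quadruple sum over `Fin p` into a sum over the product type. -/
lemma flat4 {p : ℕ} (f : Fin p → Fin p → Fin p → Fin p → ℝ) :
    ∑ i, ∑ j, ∑ k, ∑ l, f i j k l
      = ∑ q : Fin p × Fin p × Fin p × Fin p, f q.1 q.2.1 q.2.2.1 q.2.2.2 := by
  simp [Fintype.sum_prod_type]

lemma tr_flat {p : ℕ} (M S : Matrix (Fin p) (Fin p) ℝ) :
    Matrix.trace ((M*S)^2) = ∑ q : Fin p × Fin p × Fin p × Fin p,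
      M q.1 q.2.2.2 * S q.2.2.2 q.2.1 * (M q.2.1 q.2.2.1 * S q.2.2.1 q.1) := by
  simp only [Matrix.trace, Matrix.diag, pow_two, Matrix.mul_apply, Finset.sum_mul,
    Finset.mul_sum]
  exact flat4 fun i j k l => M i l * S l j * (M j k * S k i)

lemma key_tr {p : ℕ} (M S : Matrix (Fin p) (Fin p) ℝ) (hM : M.IsSymm) (hS : S.IsSymm) :
    ∑ i, ∑ j, ∑ k, ∑ l, M i j * M k l * (S i k * S j l) = Matrix.trace ((M*S)^2) := by
  rw [flat4, tr_flat]
  refine Fintype.sum_equiv ⟨fun q => (q.1, q.2.2.2, q.2.2.1, q.2.1),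
    fun q => (q.1, q.2.2.2, q.2.2.1, q.2.1), fun q => rfl, fun q => rfl⟩ _ _ fun q => ?_
  obtain ⟨a, b, c, d⟩ := q
  simp only [Equiv.coe_fn_mk]
  rw [hM.apply c d, hS.apply c a]
  ring

lemma key_tr2 {p : ℕ} (M S : Matrix (Fin p) (Fin p) ℝ) (hS : S.IsSymm) :
    ∑ i, ∑ j, ∑ k, ∑ l, M i j * M k l * (S i l * S j k) = Matrix.trace ((M*S)^2) := by
  rw [flat4, tr_flat]
  refine Fintype.sum_equiv ⟨fun q => (q.1, q.2.2.1, q.2.2.2, q.2.1),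
    fun q => (q.1, q.2.2.2, q.2.1, q.2.2.1), fun q => rfl, fun q => rfl⟩ _ _ fun q => ?_
  obtain ⟨a, b, c, d⟩ := q
  simp only [Equiv.coe_fn_mk]
  rw [hS.apply d a]
  ring

/-- coefficient function for the two-sample U-statistic. -/
def coefPH {n1 n2 : ℕ} (k1 k2 k12 : ℝ) : (Fin n1 ⊕ Fin n2) × (Fin n1 ⊕ Fin n2) → ℝ :=
  fun q => Sum.elim (fun _ => Sum.elim (fun _ => k1) (fun _ => k12) q.2)
                    (fun _ => Sum.elim (fun _ => k12) (fun _ => k2) q.2) q.1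

lemma coefPH_swap {n1 n2 : ℕ} (k1 k2 k12 : ℝ) (q : (Fin n1 ⊕ Fin n2) × (Fin n1 ⊕ Fin n2)) :
    coefPH k1 k2 k12 (q.2, q.1) = coefPH k1 k2 k12 q := by
  obtain ⟨a | a, b | b⟩ := q <;> simp [coefPH]

lemma sum_offdiag_const (n : ℕ) (v : ℝ) :
    (∑ s : Fin n, ∑ t : Fin n, if s = t then 0 else v) = (n:ℝ) * ((n:ℝ) - 1) * v := by
  have h : ∀ s : Fin n, (∑ t : Fin n, if s = t then 0 else v) = (n:ℝ) * v - v := by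
    intro s
    have h1 : (∑ t : Fin n, if s = t then 0 else v)
        = ∑ t : Fin n, (v - if s = t then v else 0) :=
      Finset.sum_congr rfl fun t _ => by split_ifs <;> ring
    rw [h1, Finset.sum_sub_distrib, Finset.sum_const, Finset.sum_ite_eq,
      if_pos (Finset.mem_univ s), Finset.card_univ, Fintype.card_fin, nsmul_eq_mul]
  rw [Finset.sum_congr rfl fun s _ => h s, Finset.sum_const, Finset.card_univ,
    Fintype.card_fin, nsmul_eq_mul]
  ring

lemma aux_l2_mul {Ω : Type*} [MeasurableSpace Ω] {μ : Measure Ω} {f g : Ω → ℝ}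
    (hf : MemLp f 2 μ) (hg : MemLp g 2 μ) :
    Integrable (fun ω => f ω * g ω) μ := by
  refine Integrable.mono' ((hf.integrable_sq.add hg.integrable_sq).div_const 2)
    (hf.aestronglyMeasurable.mul hg.aestronglyMeasurable)
    (Filter.Eventually.of_forall fun ω => ?_)
  simp only [Real.norm_eq_abs, abs_mul, Pi.add_apply, Pi.div_apply]
  nlinarith [sq_nonneg (|f ω| - |g ω|), sq_abs (f ω), sq_abs (g ω), abs_nonneg (f ω),
    abs_nonneg (g ω)]

section Prob
variable {Ω : Type*} [MeasurableSpace Ω] {μ : Measure Ω} [IsProbabilityMeasure μ]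
  {ι : Type*} {p : ℕ} {W : ι → Ω → Fin p → ℝ}

lemma aux_two (hindep : iIndepFun W μ)
    {a b : ι} (hab : a ≠ b) {F G : (Fin p → ℝ) → ℝ} (hF : Measurable F) (hG : Measurable G)
    (hFi : Integrable (fun ω => F (W a ω)) μ) (hGi : Integrable (fun ω => G (W b ω)) μ) :
    Integrable (fun ω => F (W a ω) * G (W b ω)) μ ∧
      ∫ ω, F (W a ω) * G (W b ω) ∂μ = (∫ ω, F (W a ω) ∂μ) * ∫ ω, G (W b ω) ∂μ := by
  have h : IndepFun (fun ω => F (W a ω)) (fun ω => G (W b ω)) μ :=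
    (hindep.indepFun hab).comp hF hG
  exact ⟨h.integrable_mul hFi hGi, h.integral_mul_eq_mul_integral hFi.aestronglyMeasurable hGi.aestronglyMeasurable⟩

lemma aux_three (hindep : iIndepFun W μ) (hmeas : ∀ a, Measurable (W a))
    {a b c : ι} (hab : a ≠ b) (hac : a ≠ c) (hbc : b ≠ c)
    {F G H : (Fin p → ℝ) → ℝ} (hF : Measurable F) (hG : Measurable G) (hH : Measurable H)
    (hFi : Integrable (fun ω => F (W a ω)) μ) (hGi : Integrable (fun ω => G (W b ω)) μ)
    (hHi : Integrable (fun ω => H (W c ω)) μ) :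
    Integrable (fun ω => F (W a ω) * G (W b ω) * H (W c ω)) μ ∧
      ∫ ω, F (W a ω) * G (W b ω) * H (W c ω) ∂μ =
        (∫ ω, F (W a ω) ∂μ) * (∫ ω, G (W b ω) ∂μ) * ∫ ω, H (W c ω) ∂μ := by
  obtain ⟨hFG, hFGval⟩ := aux_two hindep hab hF hG hFi hGi
  have h : IndepFun (fun ω => F (W a ω) * G (W b ω)) (fun ω => H (W c ω)) μ := by
    have h2 := hindep.indepFun_prodMk hmeas a b c hac hbc
    exact h2.comp ((hF.comp measurable_fst).mul (hG.comp measurable_snd)) hH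
  refine ⟨h.integrable_mul hFG hHi, ?_⟩
  have h3 := h.integral_mul_eq_mul_integral hFG.aestronglyMeasurable hHi.aestronglyMeasurable
  rw [show ((fun ω => F (W a ω) * G (W b ω)) * fun ω => H (W c ω))
      = fun ω => F (W a ω) * G (W b ω) * H (W c ω) from rfl] at h3
  rw [h3, hFGval]

end Prob
end Aux12
set_option maxHeartbeats 1000000 in
/-- For two mutually independent i.i.d. mean-zero samples `X₁,…,X_{n₁}` and
`Y₁,…,Y_{n₂}` (encoded as one jointly independent family `W` indexed by `Fin n₁ ⊕ Fin n₂`)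
with common covariance `Σ`, and `M` symmetric, the two-sample U-statistic `T` satisfies
`E(T) = 0` and `Var(T) = φ(n₁,n₂) tr((MΣ)²)`,
where `φ(n₁,n₂) = 2/(n₁(n₁−1)) + 2/(n₂(n₂−1)) + 4/(n₁n₂)`. -/
theorem statement12 {Ω : Type*} [MeasurableSpace Ω] (μ : Measure Ω) [IsProbabilityMeasure μ]
    {n1 n2 p : ℕ} (hn1 : 2 ≤ n1) (hn2 : 2 ≤ n2)
    (W : Fin n1 ⊕ Fin n2 → Ω → Fin p → ℝ)
    (hmeas : ∀ a, Measurable (W a))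
    (hindep : iIndepFun W μ)
    (hidX : ∀ s s' : Fin n1, μ.map (W (Sum.inl s)) = μ.map (W (Sum.inl s')))
    (hidY : ∀ t t' : Fin n2, μ.map (W (Sum.inr t)) = μ.map (W (Sum.inr t')))
    (hL2 : ∀ a i, MemLp (fun ω => W a ω i) 2 μ)
    (hmean : ∀ a i, ∫ ω, W a ω i ∂μ = 0)
    (S : Matrix (Fin p) (Fin p) ℝ)
    (hS : ∀ a i j, S i j = ∫ ω, W a ω i * W a ω j ∂μ)
    (M : Matrix (Fin p) (Fin p) ℝ) (hM : M.IsSymm)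
    (T : Ω → ℝ)
    (hT : T = fun ω =>
      (1 / ((n1 : ℝ) * ((n1 : ℝ) - 1))) *
          (∑ s : Fin n1, ∑ t : Fin n1,
            if t ≠ s then W (Sum.inl s) ω ⬝ᵥ M.mulVec (W (Sum.inl t) ω) else 0) +
        (1 / ((n2 : ℝ) * ((n2 : ℝ) - 1))) *
          (∑ s : Fin n2, ∑ t : Fin n2,
            if t ≠ s then W (Sum.inr s) ω ⬝ᵥ M.mulVec (W (Sum.inr t) ω) else 0) -
        (2 / ((n1 : ℝ) * (n2 : ℝ))) *
          ∑ s : Fin n1, ∑ t : Fin n2, W (Sum.inl s) ω ⬝ᵥ M.mulVec (W (Sum.inr t) ω)) :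
    (∫ ω, T ω ∂μ = 0) ∧
      variance T μ =
        (2 / ((n1 : ℝ) * ((n1 : ℝ) - 1)) + 2 / ((n2 : ℝ) * ((n2 : ℝ) - 1)) +
            4 / ((n1 : ℝ) * (n2 : ℝ))) * Matrix.trace ((M * S) ^ 2) := by
  classical
  -- abbreviations
  have h2n1 : (2:ℝ) ≤ (n1:ℝ) := by exact_mod_cast hn1
  have h2n2 : (2:ℝ) ≤ (n2:ℝ) := by exact_mod_cast hn2
  have hn1ne : (n1:ℝ) ≠ 0 := by linarith
  have hn2ne : (n2:ℝ) ≠ 0 := by linarith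
  have hn1ne' : (n1:ℝ) - 1 ≠ 0 := by linarith
  have hn2ne' : (n2:ℝ) - 1 ≠ 0 := by linarith
  set ccf : (Fin n1 ⊕ Fin n2) × (Fin n1 ⊕ Fin n2) → ℝ :=
    coefPH (1 / ((n1:ℝ) * ((n1:ℝ) - 1))) (1 / ((n2:ℝ) * ((n2:ℝ) - 1)))
      (-(1 / ((n1:ℝ) * (n2:ℝ)))) with hccf
  set B : (Fin n1 ⊕ Fin n2) → (Fin n1 ⊕ Fin n2) → Ω → ℝ :=
    fun a b ω => W a ω ⬝ᵥ M.mulVec (W b ω) with hBdef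
  set Q : Finset ((Fin n1 ⊕ Fin n2) × (Fin n1 ⊕ Fin n2)) :=
    Finset.univ.filter (fun q => q.1 ≠ q.2) with hQdef
  -- basic facts
  have hdot : ∀ v w : Fin p → ℝ, v ⬝ᵥ M.mulVec w = ∑ i, ∑ j, M i j * (v i * w j) := by
    intro v w
    simp only [dotProduct, Matrix.mulVec, Finset.mul_sum]
    exact Finset.sum_congr rfl fun i _ => Finset.sum_congr rfl fun j _ => by ring
  have hBsum : ∀ a b (ω : Ω), B a b ω = ∑ i, ∑ j, M i j * (W a ω i * W b ω j) :=
    fun a b ω => hdot _ _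
  have hmW : ∀ a i, Measurable fun ω => W a ω i :=
    fun a i => (measurable_pi_apply i).comp (hmeas a)
  have hWint : ∀ a i, Integrable (fun ω => W a ω i) μ :=
    fun a i => (hL2 a i).integrable one_le_two
  have hSsymm : S.IsSymm := by
    apply Matrix.IsSymm.ext
    intro i j
    have a0 : Fin n1 ⊕ Fin n2 := Sum.inl ⟨0, by omega⟩
    rw [hS (Sum.inl ⟨0, by omega⟩) j i, hS (Sum.inl ⟨0, by omega⟩) i j]
    congr 1
    funext ω
    ring
  have hmeasB : ∀ a b, Measurable (B a b) := by
    intro a b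
    have h : B a b = fun ω => ∑ i, ∑ j, M i j * (W a ω i * W b ω j) := funext (hBsum a b)
    rw [h]
    exact Finset.measurable_sum _ fun i _ => Finset.measurable_sum _ fun j _ =>
      ((hmW a i).mul (hmW b j)).const_mul _
  have hpair : ∀ a b : Fin n1 ⊕ Fin n2, a ≠ b → ∀ i j,
      Integrable (fun ω => W a ω i * W b ω j) μ ∧ ∫ ω, W a ω i * W b ω j ∂μ = 0 := by
    intro a b hab i j
    have h := aux_two (F := fun v => v i) (G := fun v => v j) hindep hab
      (measurable_pi_apply i) (measurable_pi_apply j) (hWint a i) (hWint b j)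
    obtain ⟨h1, h2⟩ := h
    refine ⟨h1, ?_⟩
    simp only [hmean] at h2
    simpa using h2
  have hBint : ∀ a b, a ≠ b → Integrable (B a b) μ := by
    intro a b hab
    have h : B a b = fun ω => ∑ i, ∑ j, M i j * (W a ω i * W b ω j) := funext (hBsum a b)
    rw [h]
    exact integrable_finset_sum _ fun i _ => integrable_finset_sum _ fun j _ =>
      ((hpair a b hab i j).1.const_mul _)
  have hBzero : ∀ a b, a ≠ b → ∫ ω, B a b ω ∂μ = 0 := by
    intro a b hab
    have h : (fun ω => B a b ω) = fun ω => ∑ i, ∑ j, M i j * (W a ω i * W b ω j) :=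
      funext (hBsum a b)
    rw [h, integral_finset_sum _ fun i _ => integrable_finset_sum _ fun j _ =>
      ((hpair a b hab i j).1.const_mul (M i j))]
    refine Finset.sum_eq_zero fun i _ => ?_
    rw [integral_finset_sum _ fun j _ => ((hpair a b hab i j).1.const_mul (M i j))]
    refine Finset.sum_eq_zero fun j _ => ?_
    rw [integral_const_mul, (hpair a b hab i j).2, mul_zero]
  have hexpand : ∀ a b c d (ω : Ω), B a b ω * B c d ω
      = ∑ q : Fin p × Fin p × Fin p × Fin p,
          M q.1 q.2.1 * M q.2.2.1 q.2.2.2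
            * (W a ω q.1 * W b ω q.2.1 * (W c ω q.2.2.1 * W d ω q.2.2.2)) := by
    intro a b c d ω
    calc B a b ω * B c d ω
        = ∑ i, ∑ j, ∑ k, ∑ l, M k l * M i j
            * (W a ω k * W b ω l * (W c ω i * W d ω j)) := by
          rw [hBsum, hBsum]
          simp only [Finset.sum_mul, Finset.mul_sum]
          exact Finset.sum_congr rfl fun i _ => Finset.sum_congr rfl fun j _ =>
            Finset.sum_congr rfl fun k _ => Finset.sum_congr rfl fun l _ => by ring
      _ = ∑ q : Fin p × Fin p × Fin p × Fin p,
            M q.2.2.1 q.2.2.2 * M q.1 q.2.1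
              * (W a ω q.2.2.1 * W b ω q.2.2.2 * (W c ω q.1 * W d ω q.2.1)) := flat4 _
      _ = _ := by
          refine Fintype.sum_equiv ⟨fun q => (q.2.2.1, q.2.2.2, q.1, q.2.1),
            fun q => (q.2.2.1, q.2.2.2, q.1, q.2.1), fun q => rfl, fun q => rfl⟩ _ _ fun q => ?_
          simp only [Equiv.coe_fn_mk]
  have hquad : ∀ (a b c d : Fin n1 ⊕ Fin n2) (v : Fin p → Fin p → Fin p → Fin p → ℝ),
      (∀ i j k l, Integrable (fun ω => W a ω i * W b ω j * (W c ω k * W d ω l)) μ ∧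
          ∫ ω, W a ω i * W b ω j * (W c ω k * W d ω l) ∂μ = v i j k l) →
      Integrable (fun ω => B a b ω * B c d ω) μ ∧
        ∫ ω, B a b ω * B c d ω ∂μ = ∑ i, ∑ j, ∑ k, ∑ l, M i j * M k l * v i j k l := by
    intro a b c d v hv
    have heq : (fun ω => B a b ω * B c d ω) = fun ω => ∑ q : Fin p × Fin p × Fin p × Fin p,
        M q.1 q.2.1 * M q.2.2.1 q.2.2.2
          * (W a ω q.1 * W b ω q.2.1 * (W c ω q.2.2.1 * W d ω q.2.2.2)) :=
      funext (hexpand a b c d)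
    have hint : ∀ q : Fin p × Fin p × Fin p × Fin p, Integrable (fun ω =>
        M q.1 q.2.1 * M q.2.2.1 q.2.2.2
          * (W a ω q.1 * W b ω q.2.1 * (W c ω q.2.2.1 * W d ω q.2.2.2))) μ :=
      fun q => ((hv q.1 q.2.1 q.2.2.1 q.2.2.2).1).const_mul _
    constructor
    · rw [heq]; exact integrable_finset_sum _ fun q _ => hint q
    · rw [heq, integral_finset_sum _ fun q _ => hint q,
        flat4 (fun i j k l => M i j * M k l * v i j k l)]
      refine Finset.sum_congr rfl fun q _ => ?_
      rw [integral_const_mul, (hv q.1 q.2.1 q.2.2.1 q.2.2.2).2]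
  have hKey : ∀ a b c d : Fin n1 ⊕ Fin n2, a ≠ b → c ≠ d →
      Integrable (fun ω => B a b ω * B c d ω) μ ∧
        ∫ ω, B a b ω * B c d ω ∂μ =
          (if (c, d) = (a, b) then Matrix.trace ((M * S) ^ 2) else 0)
            + (if (c, d) = (b, a) then Matrix.trace ((M * S) ^ 2) else 0) := by
    intro a b c d hab hcd
    by_cases hca : a = c
    · subst hca
      by_cases hdb : b = d
      · subst hdb
        have hterm : ∀ i j k l : Fin p,
            Integrable (fun ω => W a ω i * W b ω j * (W a ω k * W b ω l)) μ ∧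
              ∫ ω, W a ω i * W b ω j * (W a ω k * W b ω l) ∂μ = S i k * S j l := by
          intro i j k l
          have hre : (fun ω => W a ω i * W b ω j * (W a ω k * W b ω l))
              = fun ω => (W a ω i * W a ω k) * (W b ω j * W b ω l) := funext fun ω => by ring
          obtain ⟨h1, h2⟩ := aux_two (F := fun v => v i * v k) (G := fun v => v j * v l)
            hindep hab
            ((measurable_pi_apply i).mul (measurable_pi_apply k))
            ((measurable_pi_apply j).mul (measurable_pi_apply l))
            (aux_l2_mul (hL2 a i) (hL2 a k)) (aux_l2_mul (hL2 b j) (hL2 b l))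
          simp only [← hS] at h2
          exact ⟨by rw [hre]; exact h1, by rw [hre]; exact h2⟩
        obtain ⟨h1, h2⟩ := hquad a b a b _ hterm
        refine ⟨h1, ?_⟩
        rw [h2, key_tr M S hM hSsymm, if_pos rfl, if_neg, add_zero]
        exact fun h => hab (congrArg Prod.fst h)
      · have hterm : ∀ i j k l : Fin p,
            Integrable (fun ω => W a ω i * W b ω j * (W a ω k * W d ω l)) μ ∧
              ∫ ω, W a ω i * W b ω j * (W a ω k * W d ω l) ∂μ = 0 := by
          intro i j k l
          have hre : (fun ω => W a ω i * W b ω j * (W a ω k * W d ω l))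
              = fun ω => (W a ω i * W a ω k) * W b ω j * W d ω l := funext fun ω => by ring
          obtain ⟨h1, h2⟩ := aux_three (F := fun v => v i * v k) (G := fun v => v j)
            (H := fun v => v l) hindep hmeas hab hcd hdb
            ((measurable_pi_apply i).mul (measurable_pi_apply k))
            (measurable_pi_apply j) (measurable_pi_apply l)
            (aux_l2_mul (hL2 a i) (hL2 a k)) (hWint b j) (hWint d l)
          simp only [hmean, mul_zero, zero_mul] at h2
          exact ⟨by rw [hre]; exact h1, by rw [hre]; exact h2⟩
        obtain ⟨h1, h2⟩ := hquad a b a d _ hterm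
        refine ⟨h1, ?_⟩
        rw [h2, if_neg, if_neg]
        · simp
        · exact fun h => hab (congrArg Prod.fst h)
        · exact fun h => hdb (congrArg Prod.snd h).symm
    · by_cases hda : a = d
      · subst hda
        by_cases hcb : b = c
        · subst hcb
          have hterm : ∀ i j k l : Fin p,
              Integrable (fun ω => W a ω i * W b ω j * (W b ω k * W a ω l)) μ ∧
                ∫ ω, W a ω i * W b ω j * (W b ω k * W a ω l) ∂μ = S i l * S j k := by
            intro i j k l
            have hre : (fun ω => W a ω i * W b ω j * (W b ω k * W a ω l))
                = fun ω => (W a ω i * W a ω l) * (W b ω j * W b ω k) := funext fun ω => by ring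
            obtain ⟨h1, h2⟩ := aux_two (F := fun v => v i * v l) (G := fun v => v j * v k)
              hindep hab
              ((measurable_pi_apply i).mul (measurable_pi_apply l))
              ((measurable_pi_apply j).mul (measurable_pi_apply k))
              (aux_l2_mul (hL2 a i) (hL2 a l)) (aux_l2_mul (hL2 b j) (hL2 b k))
            simp only [← hS] at h2
            exact ⟨by rw [hre]; exact h1, by rw [hre]; exact h2⟩
          obtain ⟨h1, h2⟩ := hquad a b b a _ hterm
          refine ⟨h1, ?_⟩
          rw [h2, key_tr2 M S hSsymm, if_neg, if_pos rfl, zero_add]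
          exact fun h => hab (congrArg Prod.fst h).symm
        · have hterm : ∀ i j k l : Fin p,
              Integrable (fun ω => W a ω i * W b ω j * (W c ω k * W a ω l)) μ ∧
                ∫ ω, W a ω i * W b ω j * (W c ω k * W a ω l) ∂μ = 0 := by
            intro i j k l
            have hre : (fun ω => W a ω i * W b ω j * (W c ω k * W a ω l))
                = fun ω => (W a ω i * W a ω l) * W b ω j * W c ω k := funext fun ω => by ring
            obtain ⟨h1, h2⟩ := aux_three (F := fun v => v i * v l) (G := fun v => v j)
              (H := fun v => v k) hindep hmeas hab hca hcb
              ((measurable_pi_apply i).mul (measurable_pi_apply l))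
              (measurable_pi_apply j) (measurable_pi_apply k)
              (aux_l2_mul (hL2 a i) (hL2 a l)) (hWint b j) (hWint c k)
            simp only [hmean, mul_zero, zero_mul] at h2
            exact ⟨by rw [hre]; exact h1, by rw [hre]; exact h2⟩
          obtain ⟨h1, h2⟩ := hquad a b c a _ hterm
          refine ⟨h1, ?_⟩
          rw [h2, if_neg, if_neg]
          · simp
          · exact fun h => hcb (congrArg Prod.fst h).symm
          · exact fun h => hca (congrArg Prod.fst h).symm
      · by_cases hcb : b = c
        · subst hcb
          have hterm : ∀ i j k l : Fin p,
              Integrable (fun ω => W a ω i * W b ω j * (W b ω k * W d ω l)) μ ∧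
                ∫ ω, W a ω i * W b ω j * (W b ω k * W d ω l) ∂μ = 0 := by
            intro i j k l
            have hre : (fun ω => W a ω i * W b ω j * (W b ω k * W d ω l))
                = fun ω => (W b ω j * W b ω k) * W a ω i * W d ω l := funext fun ω => by ring
            obtain ⟨h1, h2⟩ := aux_three (F := fun v => v j * v k) (G := fun v => v i)
              (H := fun v => v l) hindep hmeas (fun h => hab h.symm) hcd hda
              ((measurable_pi_apply j).mul (measurable_pi_apply k))
              (measurable_pi_apply i) (measurable_pi_apply l)
              (aux_l2_mul (hL2 b j) (hL2 b k)) (hWint a i) (hWint d l)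
            simp only [hmean, mul_zero, zero_mul] at h2
            exact ⟨by rw [hre]; exact h1, by rw [hre]; exact h2⟩
          obtain ⟨h1, h2⟩ := hquad a b b d _ hterm
          refine ⟨h1, ?_⟩
          rw [h2, if_neg, if_neg]
          · simp
          · exact fun h => hda (congrArg Prod.snd h).symm
          · exact fun h => hab (congrArg Prod.fst h).symm
        · by_cases hdb : b = d
          · subst hdb
            have hterm : ∀ i j k l : Fin p,
                Integrable (fun ω => W a ω i * W b ω j * (W c ω k * W b ω l)) μ ∧
                  ∫ ω, W a ω i * W b ω j * (W c ω k * W b ω l) ∂μ = 0 := by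
              intro i j k l
              have hre : (fun ω => W a ω i * W b ω j * (W c ω k * W b ω l))
                  = fun ω => (W b ω j * W b ω l) * W a ω i * W c ω k := funext fun ω => by ring
              obtain ⟨h1, h2⟩ := aux_three (F := fun v => v j * v l) (G := fun v => v i)
                (H := fun v => v k) hindep hmeas (fun h => hab h.symm) hcb hca
                ((measurable_pi_apply j).mul (measurable_pi_apply l))
                (measurable_pi_apply i) (measurable_pi_apply k)
                (aux_l2_mul (hL2 b j) (hL2 b l)) (hWint a i) (hWint c k)
              simp only [hmean, mul_zero, zero_mul] at h2
              exact ⟨by rw [hre]; exact h1, by rw [hre]; exact h2⟩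
            obtain ⟨h1, h2⟩ := hquad a b c b _ hterm
            refine ⟨h1, ?_⟩
            rw [h2, if_neg, if_neg]
            · simp
            · exact fun h => hcb (congrArg Prod.fst h).symm
            · exact fun h => hca (congrArg Prod.fst h).symm
          · have hphi : Measurable (fun pr : (Fin p → ℝ) × (Fin p → ℝ) =>
                pr.1 ⬝ᵥ M.mulVec pr.2) := by
              have h : (fun pr : (Fin p → ℝ) × (Fin p → ℝ) => pr.1 ⬝ᵥ M.mulVec pr.2)
                  = fun pr => ∑ i, ∑ j, M i j * (pr.1 i * pr.2 j) :=
                funext fun pr => hdot _ _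
              rw [h]
              exact Finset.measurable_sum _ fun i _ => Finset.measurable_sum _ fun j _ =>
                (((measurable_pi_apply i).comp measurable_fst).mul
                  ((measurable_pi_apply j).comp measurable_snd)).const_mul _
            have hInd : IndepFun (B a b) (B c d) μ :=
              (hindep.indepFun_prodMk_prodMk hmeas a b c d hca hda hcb hdb).comp hphi hphi
            refine ⟨hInd.integrable_mul (hBint a b hab) (hBint c d hcd), ?_⟩
            have h2 := hInd.integral_mul_eq_mul_integral (hBint a b hab).aestronglyMeasurable (hBint c d hcd).aestronglyMeasurable
            rw [show ((B a b) * (B c d)) = fun ω => B a b ω * B c d ω from rfl] at h2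
            rw [h2, hBzero a b hab, hBzero c d hcd, if_neg, if_neg]
            · simp
            · exact fun h => hcb (congrArg Prod.fst h).symm
            · exact fun h => hca (congrArg Prod.fst h).symm
  have hMemB : ∀ a b, a ≠ b → MemLp (B a b) 2 μ := by
    intro a b hab
    refine (memLp_two_iff_integrable_sq (hmeasB a b).aestronglyMeasurable).2 ?_
    rw [show (fun ω => B a b ω ^ 2) = fun ω => B a b ω * B a b ω from
      funext fun ω => pow_two _]
    exact (hKey a b a b hab hab).1
  have hBsymm : ∀ a b (ω : Ω), B a b ω = B b a ω := by
    intro a b ω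
    rw [hBsum, hBsum, Finset.sum_comm]
    refine Finset.sum_congr rfl fun x _ => Finset.sum_congr rfl fun y _ => ?_
    rw [hM.apply x y]
    ring
  have hTfun : T = fun ω => ∑ q ∈ Q, ccf q * B q.1 q.2 ω := by
    rw [hT]; funext ω
    rw [hQdef]
    rw [Finset.sum_filter, Fintype.sum_prod_type]
    simp only [Fintype.sum_sum_type]
    simp only [hccf, coefPH, Sum.elim_inl, Sum.elim_inr, ne_eq, Sum.inl.injEq, Sum.inr.injEq,
      reduceCtorEq, not_false_eq_true, if_true, ite_not]
    simp only [Finset.sum_add_distrib]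
    have hb1 : (∑ x : Fin n1, ∑ y : Fin n1,
        if x = y then 0 else 1 / ((n1:ℝ) * ((n1:ℝ) - 1)) * B (Sum.inl x) (Sum.inl y) ω)
        = 1 / ((n1:ℝ) * ((n1:ℝ) - 1)) * ∑ x : Fin n1, ∑ y : Fin n1,
            if y = x then 0 else W (Sum.inl x) ω ⬝ᵥ M.mulVec (W (Sum.inl y) ω) := by
      rw [Finset.mul_sum]
      refine Finset.sum_congr rfl fun x _ => ?_
      rw [Finset.mul_sum]
      refine Finset.sum_congr rfl fun y _ => ?_
      by_cases h : x = y
      · subst h; simp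
      · rw [if_neg h, if_neg fun hh => h hh.symm]
    have hb2 : (∑ x : Fin n2, ∑ y : Fin n2,
        if x = y then 0 else 1 / ((n2:ℝ) * ((n2:ℝ) - 1)) * B (Sum.inr x) (Sum.inr y) ω)
        = 1 / ((n2:ℝ) * ((n2:ℝ) - 1)) * ∑ x : Fin n2, ∑ y : Fin n2,
            if y = x then 0 else W (Sum.inr x) ω ⬝ᵥ M.mulVec (W (Sum.inr y) ω) := by
      rw [Finset.mul_sum]
      refine Finset.sum_congr rfl fun x _ => ?_
      rw [Finset.mul_sum]
      refine Finset.sum_congr rfl fun y _ => ?_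
      by_cases h : x = y
      · subst h; simp
      · rw [if_neg h, if_neg fun hh => h hh.symm]
    have hcross : (∑ x : Fin n2, ∑ y : Fin n1,
        -(1 / ((n1:ℝ) * (n2:ℝ))) * B (Sum.inr x) (Sum.inl y) ω)
        = ∑ x : Fin n1, ∑ y : Fin n2,
            -(1 / ((n1:ℝ) * (n2:ℝ))) * B (Sum.inl x) (Sum.inr y) ω := by
      rw [Finset.sum_comm]
      exact Finset.sum_congr rfl fun x _ => Finset.sum_congr rfl fun y _ => by rw [hBsymm]
    have hcrossval : (∑ x : Fin n1, ∑ y : Fin n2,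
        -(1 / ((n1:ℝ) * (n2:ℝ))) * B (Sum.inl x) (Sum.inr y) ω)
        = -(1 / ((n1:ℝ) * (n2:ℝ))) * ∑ s : Fin n1, ∑ t : Fin n2,
            W (Sum.inl s) ω ⬝ᵥ M.mulVec (W (Sum.inr t) ω) := by
      rw [Finset.mul_sum]
      exact Finset.sum_congr rfl fun x _ => by rw [Finset.mul_sum]
    rw [hb1, hb2, hcross, hcrossval]
    ring
  have hQmem : ∀ q : (Fin n1 ⊕ Fin n2) × (Fin n1 ⊕ Fin n2), q ∈ Q → q.1 ≠ q.2 := by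
    intro q hq; rw [hQdef] at hq; exact (Finset.mem_filter.1 hq).2
  have hint0 : ∫ ω, (∑ q ∈ Q, ccf q * B q.1 q.2 ω) ∂μ = 0 := by
    rw [integral_finset_sum _ fun q hq => ((hBint q.1 q.2 (hQmem q hq)).const_mul _)]
    refine Finset.sum_eq_zero fun q hq => ?_
    rw [integral_const_mul, hBzero q.1 q.2 (hQmem q hq), mul_zero]
  have h0 : (∫ ω, T ω ∂μ) = 0 := by rw [hTfun]; exact hint0
  refine ⟨h0, ?_⟩
  have hT2 : MemLp T 2 μ := by
    rw [hTfun, show (fun ω => ∑ q ∈ Q, ccf q * B q.1 q.2 ω)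
        = ∑ q ∈ Q, fun ω => ccf q * B q.1 q.2 ω from
      funext fun ω => by rw [Finset.sum_apply]]
    exact memLp_finset_sum' _ fun q hq => ((hMemB q.1 q.2 (hQmem q hq)).const_mul _)
  have hTsq' : ∀ ω, (T ^ 2) ω = ∑ q ∈ Q, ∑ r ∈ Q,
      ccf q * ccf r * (B q.1 q.2 ω * B r.1 r.2 ω) := by
    intro ω
    simp only [Pi.pow_apply, hTfun]
    rw [pow_two, Finset.sum_mul_sum]
    exact Finset.sum_congr rfl fun q _ => Finset.sum_congr rfl fun r _ => by ring
  have hIntProd : ∀ q ∈ Q, ∀ r ∈ Q, Integrable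
      (fun ω => ccf q * ccf r * (B q.1 q.2 ω * B r.1 r.2 ω)) μ :=
    fun q hq r hr => ((hKey q.1 q.2 r.1 r.2 (hQmem q hq) (hQmem r hr)).1.const_mul _)
  have hμT2 : μ[T ^ 2] = ∑ q ∈ Q, ∑ r ∈ Q,
      ccf q * ccf r * ∫ ω, B q.1 q.2 ω * B r.1 r.2 ω ∂μ := by
    have h1 : μ[T ^ 2] = ∫ ω, (∑ q ∈ Q, ∑ r ∈ Q,
        ccf q * ccf r * (B q.1 q.2 ω * B r.1 r.2 ω)) ∂μ :=
      integral_congr_ae (Filter.Eventually.of_forall fun ω => hTsq' ω)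
    rw [h1, integral_finset_sum _ fun q hq =>
      integrable_finset_sum _ fun r hr => hIntProd q hq r hr]
    refine Finset.sum_congr rfl fun q hq => ?_
    rw [integral_finset_sum _ fun r hr => hIntProd q hq r hr]
    refine Finset.sum_congr rfl fun r hr => ?_
    rw [integral_const_mul]
  have hval : ∀ q ∈ Q, ∀ r ∈ Q, (∫ ω, B q.1 q.2 ω * B r.1 r.2 ω ∂μ)
      = (if r = q then Matrix.trace ((M*S)^2) else 0)
        + (if r = (q.2, q.1) then Matrix.trace ((M*S)^2) else 0) := by
    intro q hq r hr
    have h := (hKey q.1 q.2 r.1 r.2 (hQmem q hq) (hQmem r hr)).2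
    simpa only [Prod.mk.eta] using h
  have hsum : (∑ q ∈ Q, ∑ r ∈ Q, ccf q * ccf r * ∫ ω, B q.1 q.2 ω * B r.1 r.2 ω ∂μ)
      = (∑ q ∈ Q, ccf q ^ 2) * (2 * Matrix.trace ((M*S)^2)) := by
    rw [Finset.sum_mul]
    refine Finset.sum_congr rfl fun q hq => ?_
    have hqQ : q.1 ≠ q.2 := hQmem q hq
    have hswapQ : (q.2, q.1) ∈ Q := by
      rw [hQdef]; exact Finset.mem_filter.2 ⟨Finset.mem_univ _, fun h => hqQ h.symm⟩
    have hccsw : ccf (q.2, q.1) = ccf q := coefPH_swap _ _ _ q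
    calc (∑ r ∈ Q, ccf q * ccf r * ∫ ω, B q.1 q.2 ω * B r.1 r.2 ω ∂μ)
        = ∑ r ∈ Q, ((if r = q then ccf q * ccf r * Matrix.trace ((M*S)^2) else 0)
            + (if r = (q.2, q.1) then ccf q * ccf r * Matrix.trace ((M*S)^2) else 0)) := by
          refine Finset.sum_congr rfl fun r hr => ?_
          rw [hval q hq r hr, mul_add]
          congr 1 <;> split_ifs <;> ring
      _ = (∑ r ∈ Q, if r = q then ccf q * ccf r * Matrix.trace ((M*S)^2) else 0)
          + ∑ r ∈ Q, if r = (q.2, q.1) then ccf q * ccf r * Matrix.trace ((M*S)^2) else 0 :=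
          Finset.sum_add_distrib
      _ = ccf q * ccf q * Matrix.trace ((M*S)^2)
          + ccf q * ccf (q.2, q.1) * Matrix.trace ((M*S)^2) := by
          rw [Finset.sum_ite_eq' Q q, Finset.sum_ite_eq' Q (q.2, q.1),
            if_pos hq, if_pos hswapQ]
      _ = ccf q ^ 2 * (2 * Matrix.trace ((M*S)^2)) := by rw [hccsw]; ring
  have hcount : (∑ q ∈ Q, ccf q ^ 2)
      = (n1:ℝ) * ((n1:ℝ) - 1) * (1 / ((n1:ℝ) * ((n1:ℝ) - 1))) ^ 2
        + (n2:ℝ) * ((n2:ℝ) - 1) * (1 / ((n2:ℝ) * ((n2:ℝ) - 1))) ^ 2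
        + 2 * ((n1:ℝ) * (n2:ℝ) * (-(1 / ((n1:ℝ) * (n2:ℝ)))) ^ 2) := by
    rw [hQdef, Finset.sum_filter, Fintype.sum_prod_type]
    simp only [Fintype.sum_sum_type]
    simp only [hccf, coefPH, Sum.elim_inl, Sum.elim_inr, ne_eq, Sum.inl.injEq, Sum.inr.injEq,
      reduceCtorEq, not_false_eq_true, if_true, ite_not]
    simp only [Finset.sum_add_distrib]
    rw [sum_offdiag_const, sum_offdiag_const]
    simp only [Finset.sum_const, Finset.card_univ, Fintype.card_fin, nsmul_eq_mul]
    ring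
  rw [variance_eq_sub hT2, h0, hμT2, hsum, hcount]
  field_simp
  ring
end
end
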